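/- arXiv:2105.04370 — 7 statements merged into one kernel-verified Lean document; each statement's English description precedes it below -/
import Mathlib

section
/- Let q be an odd prime power and let f(x_1,...,x_n) be a non-degenerate quadratic form over F_q in an odd number n of indeterminates with determinant Δ. Then for each c ∈ F_q, the number of solutions of f(x_1,...,x_n) = c in F_q^n equals q^{n-1} + q^{(n-1)/2} η((-1)^{(n-1)/2} c Δ), where η is the quadratic character of F_q extended by η(0) = 0. -/
set_option linter.unusedSectionVars false
set_option maxHeartbeats 1000000
open Finset

namespace Stmt6

variable {Fq : Type*} [Field Fq] [Fintype Fq] [DecidableEq Fq]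

noncomputable def N (n : ℕ) (a : Fin n → Fq) (c : Fq) : ℤ :=
  Nat.card {x : Fin n → Fq // ∑ i, a i * x i ^ 2 = c}

lemma N_zero (a : Fin 0 → Fq) (c : Fq) : N 0 a c = if c = 0 then 1 else 0 := by
  rcases eq_or_ne c 0 with rfl | hc
  · simp only [if_pos rfl, N]
    norm_cast
    simp only [if_true]
    rw [Nat.card_eq_one_iff_unique]
    constructor
    · constructor
      rintro ⟨x, hx⟩ ⟨y, hy⟩
      ext i
      exact absurd i.2 (by omega)
    · exact ⟨⟨fun i => 0, by simp⟩⟩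
  · simp only [if_neg hc, N]
    norm_cast
    rw [Nat.card_eq_zero]
    left
    rw [isEmpty_subtype]
    intro x
    simpa using hc.symm

lemma N_succ (n : ℕ) (a : Fin (n + 1) → Fq) (c : Fq) :
    N (n + 1) a c = ∑ x0 : Fq, N n (fun i => a i.succ) (c - a 0 * x0 ^ 2) := by
  have e : {x : Fin (n+1) → Fq // ∑ i, a i * x i ^ 2 = c} ≃
      Σ x0 : Fq, {y : Fin n → Fq // ∑ i, a i.succ * y i ^ 2 = c - a 0 * x0 ^ 2} := by
    refine (((Fin.consEquiv (fun _ => Fq)).symm.subtypeEquiv fun x => ?_)).trans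
      (Equiv.subtypeProdEquivSigmaSubtype fun x0 (y : Fin n → Fq) =>
        ∑ i, a i.succ * y i ^ 2 = c - a 0 * x0 ^ 2)
    rw [Fin.sum_univ_succ]
    constructor
    · intro h
      simp only [Fin.consEquiv, Equiv.coe_fn_symm_mk, Fin.tail]
      rw [eq_sub_iff_add_eq, add_comm]
      exact h
    · intro h
      simp only [Fin.consEquiv, Equiv.coe_fn_symm_mk, Fin.tail] at h
      rw [eq_sub_iff_add_eq, add_comm] at h
      exact h
  simp only [N, Nat.card_eq_fintype_card]
  rw [Fintype.card_congr e, Fintype.card_sigma]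
  push_cast
  rfl

/-- Fiberwise counting over squares. -/
lemma sum_sq (hF : ringChar Fq ≠ 2) (g : Fq → ℤ) :
    ∑ x : Fq, g (x ^ 2) = ∑ s : Fq, (quadraticChar Fq s + 1) * g s := by
  have h1 : ∀ x : Fq, g (x ^ 2) = ∑ s : Fq, if x ^ 2 = s then g s else 0 := by
    intro x
    rw [Finset.sum_ite_eq (Finset.univ) (x ^ 2) g]
    simp
  simp_rw [h1]
  rw [Finset.sum_comm]
  refine Finset.sum_congr rfl fun s _ => ?_
  rw [← Finset.sum_filter, Finset.sum_const, nsmul_eq_mul]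
  congr 1
  have := quadraticChar_card_sqrts hF s
  rw [Set.toFinset_setOf] at this
  rw [← this]


lemma eta_sq_mul (u x : Fq) (hu : u ≠ 0) :
    quadraticChar Fq (u ^ 2 * x) = quadraticChar Fq x := by
  rw [map_mul, quadraticChar_sq_one' hu, one_mul]

lemma sum_eta_affine (hF : ringChar Fq ≠ 2) (b c : Fq) (hb : b ≠ 0) :
    ∑ s : Fq, quadraticChar Fq (c - b * s) = 0 := by
  have hbij : Function.Bijective (fun s : Fq => c - b * s) := by
    refine (Finite.injective_iff_bijective).mp fun x y h => ?_
    simp only [sub_right_inj] at h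
    exact mul_left_cancel₀ hb h
  rw [Fintype.sum_bijective _ hbij _ (fun t => quadraticChar Fq t) (fun s => rfl)]
  exact quadraticChar_sum_zero hF

lemma sum_eta_jacobi (hF : ringChar Fq ≠ 2) (b c : Fq) (hb : b ≠ 0) :
    ∑ s : Fq, quadraticChar Fq s * quadraticChar Fq (c - b * s)
      = (if c = 0 then (Fintype.card Fq : ℤ) - 1 else -1) * quadraticChar Fq (-b) := by
  rcases eq_or_ne c 0 with rfl | hc
  · simp only [if_pos rfl, zero_sub]
    have h1 : ∀ s : Fq, quadraticChar Fq s * quadraticChar Fq (-(b * s))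
        = if s = 0 then 0 else quadraticChar Fq (-b) := by
      intro s
      rcases eq_or_ne s 0 with rfl | hs
      · simp
      · rw [if_neg hs, ← map_mul, show s * -(b * s) = s ^ 2 * -b by ring, eta_sq_mul _ _ hs]
    simp_rw [h1]
    have h2 : ∀ s : Fq, (if s = 0 then (0:ℤ) else quadraticChar Fq (-b))
        = quadraticChar Fq (-b) - (if s = 0 then quadraticChar Fq (-b) else 0) := by
      intro s; split <;> ring
    simp_rw [h2]
    rw [Finset.sum_sub_distrib, Finset.sum_const, Finset.sum_ite_eq' univ (0 : Fq)
      (fun _ => (quadraticChar Fq (-b) : ℤ))]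
    simp only [Finset.card_univ, mem_univ, if_true, nsmul_eq_mul]
    ring
  · rw [if_neg hc]
    have hcb : c / b ≠ 0 := div_ne_zero hc hb
    have hbij : Function.Bijective (fun v : Fq => c / b * v) :=
      (Equiv.mulLeft₀ (c / b) hcb).bijective
    rw [← Fintype.sum_bijective (fun v : Fq => c / b * v) hbij
      (fun v => quadraticChar Fq (c / b * v) * quadraticChar Fq (c - b * (c / b * v)))
      _ (fun v => rfl)]
    have key : ∀ v : Fq, quadraticChar Fq (c / b * v) * quadraticChar Fq (c - b * (c / b * v))
        = quadraticChar Fq (c / b) * quadraticChar Fq c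
          * (quadraticChar Fq v * quadraticChar Fq (1 - v)) := by
      intro v
      have h3 : c - b * (c / b * v) = c * (1 - v) := by field_simp
      rw [h3, map_mul, map_mul]
      ring
    simp_rw [key]
    rw [← Finset.mul_sum]
    have hj : ∑ v : Fq, quadraticChar Fq v * quadraticChar Fq (1 - v)
        = -quadraticChar Fq (-1) := by
      have h1 := jacobiSum_nontrivial_inv (quadraticChar_ne_one hF)
      rw [(quadraticChar_isQuadratic Fq).inv] at h1
      simpa [jacobiSum] using h1
    rw [hj]
    rw [← map_mul, mul_neg, ← map_mul,
      show c / b * c * -1 = (c / b) ^ 2 * -b by field_simp, eta_sq_mul _ _ hcb]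
    ring


lemma step_even (hF : ringChar Fq ≠ 2) (m : ℕ)
    (IH : ∀ (a : Fin (2*m+1) → Fq), (∀ i, a i ≠ 0) → ∀ c : Fq,
      N (2*m+1) a c = (Fintype.card Fq : ℤ)^(2*m)
        + (Fintype.card Fq : ℤ)^m * quadraticChar Fq ((-1)^m * c * ∏ i, a i))
    (a : Fin (2*m+2) → Fq) (ha : ∀ i, a i ≠ 0) (c : Fq) :
    N (2*m+2) a c = (Fintype.card Fq : ℤ)^(2*m+1)
      + (if c = 0 then (Fintype.card Fq : ℤ) - 1 else -1) * (Fintype.card Fq : ℤ)^m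
        * quadraticChar Fq ((-1)^(m+1) * ∏ i, a i) := by
  set q : ℤ := (Fintype.card Fq : ℤ) with hq
  have h0 : a 0 ≠ 0 := ha 0
  rw [show N (2*m+2) a c
      = ∑ x0 : Fq, N (2*m+1) (fun i => a i.succ) (c - a 0 * x0 ^ 2) from N_succ (2*m+1) a c,
    sum_sq hF (fun s => N (2*m+1) (fun i => a i.succ) (c - a 0 * s))]
  have ha' : ∀ i : Fin (2*m+1), a i.succ ≠ 0 := fun i => ha i.succ
  set K : ℤ := quadraticChar Fq ((-1)^m * ∏ i : Fin (2*m+1), a i.succ) with hK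
  have expand : ∀ s : Fq, (quadraticChar Fq s + 1)
      * N (2*m+1) (fun i => a i.succ) (c - a 0 * s)
      = q^(2*m) + (quadraticChar Fq s) * q^(2*m)
        + (q^m * K) * quadraticChar Fq (c - a 0 * s)
        + (q^m * K) * ((quadraticChar Fq s) * quadraticChar Fq (c - a 0 * s)) := by
    intro s
    rw [IH _ ha', show (-1:Fq)^m * (c - a 0 * s) * ∏ i : Fin (2*m+1), a i.succ
      = ((-1)^m * ∏ i : Fin (2*m+1), a i.succ) * (c - a 0 * s) by ring, map_mul, hK]
    ring
  simp_rw [expand]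
  rw [Finset.sum_add_distrib, Finset.sum_add_distrib, Finset.sum_add_distrib,
    ← Finset.sum_mul, quadraticChar_sum_zero hF, zero_mul,
    ← Finset.mul_sum, sum_eta_affine hF (a 0) c h0, mul_zero,
    ← Finset.mul_sum, sum_eta_jacobi hF (a 0) c h0,
    Finset.sum_const, Finset.card_univ, nsmul_eq_mul, ← hq]
  have harg : K * quadraticChar Fq (-(a 0)) = quadraticChar Fq ((-1)^(m+1) * ∏ i, a i) := by
    rw [hK, ← map_mul]
    congr 1
    rw [show (∏ i : Fin (2*m+2), a i) = a 0 * ∏ i : Fin (2*m+1), a i.succ from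
      Fin.prod_univ_succ a]
    ring
  rw [← harg]; ring

lemma step_odd (hF : ringChar Fq ≠ 2) (m : ℕ)
    (IH : ∀ (a : Fin (2*m+2) → Fq), (∀ i, a i ≠ 0) → ∀ c : Fq,
      N (2*m+2) a c = (Fintype.card Fq : ℤ)^(2*m+1)
        + (if c = 0 then (Fintype.card Fq : ℤ) - 1 else -1) * (Fintype.card Fq : ℤ)^m
          * quadraticChar Fq ((-1)^(m+1) * ∏ i, a i))
    (a : Fin (2*m+3) → Fq) (ha : ∀ i, a i ≠ 0) (c : Fq) :
    N (2*m+3) a c = (Fintype.card Fq : ℤ)^(2*m+2)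
      + (Fintype.card Fq : ℤ)^(m+1) * quadraticChar Fq ((-1)^(m+1) * c * ∏ i, a i) := by
  set q : ℤ := (Fintype.card Fq : ℤ) with hq
  have h0 : a 0 ≠ 0 := ha 0
  rw [show N (2*m+3) a c
      = ∑ x0 : Fq, N (2*m+2) (fun i => a i.succ) (c - a 0 * x0 ^ 2) from N_succ (2*m+2) a c,
    sum_sq hF (fun s => N (2*m+2) (fun i => a i.succ) (c - a 0 * s))]
  have ha' : ∀ i : Fin (2*m+2), a i.succ ≠ 0 := fun i => ha i.succ
  set K : ℤ := quadraticChar Fq ((-1)^(m+1) * ∏ i : Fin (2*m+2), a i.succ) with hK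
  set t : Fq := (a 0)⁻¹ * c with ht
  have expand : ∀ s : Fq, (quadraticChar Fq s + 1)
      * N (2*m+2) (fun i => a i.succ) (c - a 0 * s)
      = q^(2*m+1) + (quadraticChar Fq s) * q^(2*m+1)
        + (q^m * K) * (if s = t then (quadraticChar Fq s + 1) * q else 0)
        - (q^m * K) * (quadraticChar Fq s + 1) := by
    intro s
    rw [IH _ ha']
    have hcond : (c - a 0 * s = 0) = (s = t) := by
      rw [eq_iff_iff, sub_eq_zero, ht]
      constructor
      · rintro rfl; field_simp
      · rintro rfl; field_simp
    simp only [hcond]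
    split_ifs <;> ring
  simp_rw [expand]
  rw [Finset.sum_sub_distrib, Finset.sum_add_distrib, Finset.sum_add_distrib,
    ← Finset.sum_mul, quadraticChar_sum_zero hF, zero_mul,
    ← Finset.mul_sum, Finset.sum_ite_eq' univ t (fun s => (quadraticChar Fq s + 1) * q),
    ← Finset.mul_sum, Finset.sum_add_distrib, quadraticChar_sum_zero hF]
  simp only [Finset.sum_const, Finset.card_univ, nsmul_eq_mul, mul_one, mem_univ, if_true, ← hq]
  have harg : K * quadraticChar Fq t = quadraticChar Fq ((-1)^(m+1) * c * ∏ i, a i) := by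
    rw [hK, ← map_mul, ht]
    rw [show (-1:Fq)^(m+1) * c * ∏ i, a i
      = (a 0)^2 * ((-1)^(m+1) * (∏ i : Fin (2*m+2), a i.succ) * ((a 0)⁻¹ * c)) by
        rw [Fin.prod_univ_succ]; field_simp, eta_sq_mul _ _ h0]
  rw [← harg]; ring


lemma base_case (hF : ringChar Fq ≠ 2) (a : Fin 1 → Fq) (ha : ∀ i, a i ≠ 0) (c : Fq) :
    N 1 a c = 1 + quadraticChar Fq (c * ∏ i, a i) := by
  have h0 : a 0 ≠ 0 := ha 0
  rw [show N 1 a c = ∑ x0 : Fq, N 0 (fun i => a i.succ) (c - a 0 * x0 ^ 2) from N_succ 0 a c,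
    sum_sq hF (fun s => N 0 (fun i => a i.succ) (c - a 0 * s))]
  have expand : ∀ s : Fq, (quadraticChar Fq s + 1) * N 0 (fun i => a i.succ) (c - a 0 * s)
      = if s = (a 0)⁻¹ * c then quadraticChar Fq s + 1 else 0 := by
    intro s
    rw [N_zero]
    have hcond : (c - a 0 * s = 0) = (s = (a 0)⁻¹ * c) := by
      rw [eq_iff_iff, sub_eq_zero]
      constructor
      · rintro rfl; field_simp
      · rintro rfl; field_simp
    simp only [hcond]
    split_ifs <;> ring
  simp_rw [expand]
  rw [Finset.sum_ite_eq' univ ((a 0)⁻¹ * c) (fun s => (quadraticChar Fq s + 1 : ℤ))]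
  simp only [mem_univ, if_true]
  have harg : quadraticChar Fq ((a 0)⁻¹ * c) = quadraticChar Fq (c * ∏ i, a i) := by
    rw [show c * ∏ i : Fin 1, a i = (a 0) ^ 2 * ((a 0)⁻¹ * c) by
      rw [Fin.prod_univ_one]; field_simp, eta_sq_mul _ _ h0]
  rw [harg]; ring

lemma odd_formula (hF : ringChar Fq ≠ 2) (m : ℕ) :
    ∀ (a : Fin (2*m+1) → Fq), (∀ i, a i ≠ 0) → ∀ c : Fq,
      N (2*m+1) a c = (Fintype.card Fq : ℤ)^(2*m)
        + (Fintype.card Fq : ℤ)^m * quadraticChar Fq ((-1)^m * c * ∏ i, a i) := by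
  induction m with
  | zero =>
    intro a ha c
    simpa using base_case hF a ha c
  | succ k ih =>
    have h := step_odd hF k (step_even hF k ih)
    rw [show 2*k+3 = 2*(k+1)+1 by ring] at h
    rw [show 2*k+2 = 2*(k+1) by ring] at h
    exact h

end Stmt6

/-- for a non-degenerate diagonal quadratic form
`f(x) = ∑ aᵢ xᵢ²` in an odd number `n` of variables over `F_q` (`q` odd), the number
of solutions of `f(x) = c` is `q^{n-1} + q^{(n-1)/2} η((-1)^{(n-1)/2} c Δ)`. -/
theorem stmt_6 (Fq : Type*) [Field Fq] [Fintype Fq] [DecidableEq Fq]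
    (hodd : ringChar Fq ≠ 2) (n : ℕ) (hn : Odd n)
    (a : Fin n → Fq) (ha : ∀ i, a i ≠ 0) (c : Fq) :
    (Nat.card {x : Fin n → Fq // ∑ i, a i * x i ^ 2 = c} : ℤ)
      = (Fintype.card Fq : ℤ) ^ (n - 1)
        + (Fintype.card Fq : ℤ) ^ ((n - 1) / 2)
          * quadraticChar Fq ((-1) ^ ((n - 1) / 2) * c * ∏ i, a i) := by
  obtain ⟨m, rfl⟩ := hn
  have e2 : 2*m/2 = m := by omega
  rw [Nat.add_sub_cancel, e2]
  exact Stmt6.odd_formula hodd m a ha c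
end

section
/- Let p be an odd prime, q = p^m, and let C be the F_p-linear code C = { (Tr(a x^2 + b x))_{x ∈ F_q^*} : a, b ∈ F_q } ⊆ F_p^{q-1}. Then C has length q-1 and dimension 2m over F_p. -/
/-- the `F_p`-linear code `C = {(Tr(ax² + bx))_{x ∈ F_q^*} : a, b ∈ F_q}`
has length `q - 1` and dimension `2m`. -/
theorem stmt_7 (p m : ℕ) (hp : p.Prime) (hodd : p ≠ 2) (hm : 0 < m)
    (F : Type*) [Field F] [Fintype F] [Algebra (ZMod p) F]
    (hcard : Fintype.card F = p ^ m)
    (C : Submodule (ZMod p) ({x : F // x ≠ 0} → ZMod p))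
    (hC : (C : Set ({x : F // x ≠ 0} → ZMod p)) =
      {w | ∃ a b : F, w = fun x => Algebra.trace (ZMod p) F (a * x.val ^ 2 + b * x.val)}) :
    Nat.card {x : F // x ≠ 0} = p ^ m - 1 ∧ Module.finrank (ZMod p) C = 2 * m := by
  haveI : Fact p.Prime := ⟨hp⟩
  classical
  constructor
  · rw [Nat.card_eq_fintype_card, ← hcard]
    have : Fintype.card {x : F // ¬ x = 0} = Fintype.card F - Fintype.card {x : F // x = 0} :=
      Fintype.card_subtype_compl _
    simpa using this
  · -- the linear map (a,b) ↦ codeword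
    set T := Algebra.trace (ZMod p) F with hT
    let φ : (F × F) →ₗ[ZMod p] ({x : F // x ≠ 0} → ZMod p) :=
      { toFun := fun ab => fun x => T (ab.1 * x.val ^ 2 + ab.2 * x.val)
        map_add' := by
          intro u v
          funext x
          simp [add_mul]
          ring
        map_smul' := by
          intro c u
          funext x
          simp [smul_mul_assoc, mul_add] }
    have hrange : C = LinearMap.range φ := by
      apply Submodule.ext
      intro w
      rw [← SetLike.mem_coe, hC]
      constructor
      · rintro ⟨a, b, rfl⟩; exact ⟨(a, b), rfl⟩
      · rintro ⟨⟨a, b⟩, rfl⟩; exact ⟨a, b, rfl⟩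
    have hinj : Function.Injective φ := by
      rw [← LinearMap.ker_eq_bot]
      rw [Submodule.eq_bot_iff]
      rintro ⟨a, b⟩ hab
      rw [LinearMap.mem_ker] at hab
      -- for all x (including 0), T (a x² + b x) = 0
      have key : ∀ x : F, T (a * x ^ 2 + b * x) = 0 := by
        intro x
        by_cases hx : x = 0
        · simp [hx]
        · exact congrFun hab ⟨x, hx⟩
      have h2 : ∀ x y : F, T (2 * a * x * y) = 0 := by
        intro x y
        have := key (x + y)
        have h1 := key x
        have h2 := key y
        have expand : a * (x + y) ^ 2 + b * (x + y) =
            (a * x ^ 2 + b * x) + (a * y ^ 2 + b * y) + (2 * a * x * y) := by ring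
        rw [expand, map_add, map_add, h1, h2] at this
        simpa using this
      have hnd := traceForm_nondegenerate (ZMod p) F
      have ha : a = 0 := by
        have h2a : 2 * a = 0 := by
          apply hnd.1
          intro y
          have := h2 1 y
          simpa [Algebra.traceForm_apply] using this
        have two_ne : (2 : F) ≠ 0 := by
          haveI : CharP F p := charP_of_injective_algebraMap
            (algebraMap (ZMod p) F).injective p
          have : ((2 : ℕ) : F) ≠ 0 := by
            rw [Ne, CharP.cast_eq_zero_iff F p]
            intro hd
            exact hodd ((Nat.prime_dvd_prime_iff_eq hp Nat.prime_two).mp hd)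
          simpa using this
        rcases mul_eq_zero.mp h2a with h | h
        · exact absurd h two_ne
        · exact h
      have hb : b = 0 := by
        apply hnd.1
        intro y
        have := key y
        rw [ha] at this
        simpa [Algebra.traceForm_apply, mul_comm] using this
      exact Prod.ext ha hb
    have hm' : Module.finrank (ZMod p) F = m := by
      have hcard2 := Module.card_eq_pow_finrank (K := ZMod p) (V := F)
      rw [ZMod.card, hcard] at hcard2
      exact (Nat.pow_right_injective hp.two_le hcard2.symm)
    rw [hrange, LinearMap.finrank_range_of_inj hinj]
    simp [hm', two_mul]
end

section
/- Let p be an odd prime, q = p^m with m odd, and let C = { (Tr(a x^2 + b x))_{x ∈ F_q^*} : a, b ∈ F_q } ⊆ F_p^{q-1}. Then the minimum distance of C is (p-1)p^{m-1} - p^{(m-1)/2}. -/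
set_option linter.unusedSectionVars false
open Finset

section
variable {p m : ℕ} [Fact p.Prime] {F : Type*} [Field F] [Fintype F] [DecidableEq F]
  [Algebra (ZMod p) F]

noncomputable def TT (p : ℕ) (F : Type*) [Field F] [Fintype F] [DecidableEq F] [Fact p.Prime]
    [Algebra (ZMod p) F] (s : ZMod p) : ℤ :=
  ∑ z ∈ univ.filter fun z : F => Algebra.trace (ZMod p) F z = s, quadraticChar F z


lemma trace_surj : Function.Surjective (Algebra.trace (ZMod p) F) := by
  have h0 : Algebra.trace (ZMod p) F ≠ 0 := Algebra.trace_ne_zero (ZMod p) F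
  obtain ⟨z0, hz0⟩ : ∃ z0, Algebra.trace (ZMod p) F z0 ≠ 0 := by
    by_contra h; push_neg at h; exact h0 (LinearMap.ext fun z => h z)
  intro s
  exact ⟨(s / Algebra.trace (ZMod p) F z0) • z0,
    by rw [map_smul, smul_eq_mul, div_mul_cancel₀ _ hz0]⟩

lemma fiber_card (hcard : Fintype.card F = p ^ m) (hm : 0 < m) (s : ZMod p) :
    (univ.filter fun z : F => Algebra.trace (ZMod p) F z = s).card = p ^ (m - 1) := by
  have hp := (Fact.out : p.Prime)
  have hcongr : ∀ s : ZMod p, (univ.filter fun z : F => Algebra.trace (ZMod p) F z = s).card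
      = (univ.filter fun z : F => Algebra.trace (ZMod p) F z = 0).card := by
    intro s
    obtain ⟨w, hw⟩ := trace_surj (p := p) (F := F) s
    apply Finset.card_bij' (fun z _ => z - w) (fun z _ => z + w)
    · intro a ha
      simp only [mem_filter, mem_univ, true_and] at ha ⊢
      rw [map_sub, ha, hw, sub_self]
    · intro a ha
      simp only [mem_filter, mem_univ, true_and] at ha ⊢
      rw [map_add, ha, hw, zero_add]
    · intros; ring
    · intros; ring
  have htot : ∑ s : ZMod p, (univ.filter fun z : F => Algebra.trace (ZMod p) F z = s).card
      = Fintype.card F := by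
    rw [← Finset.card_eq_sum_card_fiberwise (fun z _ => mem_univ _), Finset.card_univ]
  have : p * (univ.filter fun z : F => Algebra.trace (ZMod p) F z = 0).card = p ^ m := by
    rw [← hcard, ← htot]
    rw [Finset.sum_congr rfl (fun s _ => hcongr s)]
    simp [Finset.sum_const, ZMod.card, mul_comm]
  rw [hcongr]
  have hpm : p ^ m = p * p ^ (m - 1) := by
    conv_lhs => rw [← Nat.succ_pred_eq_of_pos hm]
    rw [pow_succ, mul_comm]; rfl
  rw [hpm] at this
  exact Nat.eq_of_mul_eq_mul_left hp.pos this


omit [Fintype F] [DecidableEq F] in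
lemma ringChar_F : ringChar F = p := by
  haveI : CharP F p := charP_of_injective_algebraMap (algebraMap (ZMod p) F).injective p
  exact (ringChar.eq F p).symm ▸ rfl

lemma char_compat (hodd : p ≠ 2) (hm : Odd m) (hcard : Fintype.card F = p ^ m) (t : ZMod p) :
    quadraticChar F (algebraMap (ZMod p) F t) = quadraticChar (ZMod p) t := by
  have hp := (Fact.out : p.Prime)
  have hrF : ringChar F = p := ringChar_F
  have hrZ : ringChar (ZMod p) = p := ZMod.ringChar_zmod_n p
  have hrF2 : ringChar F ≠ 2 := by rw [hrF]; exact hodd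
  have hrZ2 : ringChar (ZMod p) ≠ 2 := by rw [hrZ]; exact hodd
  by_cases ht : t = 0
  · rw [ht, map_zero, MulChar.map_zero, MulChar.map_zero]
  have ht' : algebraMap (ZMod p) F t ≠ 0 := by
    simpa using (algebraMap (ZMod p) F).injective.ne_iff.mpr ht
  obtain ⟨e, hpe⟩ : ∃ e, p = 2 * e + 1 := by
    obtain ⟨j, hj⟩ := hp.odd_of_ne_two hodd; exact ⟨j, by omega⟩
  set N := ∑ i ∈ range m, p ^ i with hN
  have hple : 1 ≤ p := hp.one_lt.le
  have h1 : 1 ≤ p ^ m := Nat.one_le_pow _ _ hp.pos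
  have hgeom : (p - 1) * N = p ^ m - 1 := by
    have hcast : ((N : ℕ) : ℤ) = ∑ i ∈ range m, (p : ℤ) ^ i := by rw [hN]; push_cast; rfl
    have hz : (((p - 1) * N : ℕ) : ℤ) = ((p ^ m : ℕ) : ℤ) - 1 := by
      push_cast [Nat.cast_sub hple]
      rw [hcast, mul_comm, geom_sum_mul]
    omega
  have hNodd : N % 2 = 1 := by
    have hpow : ∀ i : ℕ, p ^ i % 2 = 1 := fun i =>
      Nat.odd_iff.mp ((hp.odd_of_ne_two hodd).pow)
    rw [hN, Finset.sum_nat_mod, Finset.sum_congr rfl fun i _ => hpow i]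
    simp only [Finset.sum_const, card_range, smul_eq_mul, mul_one]
    have := Nat.odd_iff.mp hm
    omega
  have hq2 : p ^ m / 2 = e * N := by
    have he : p - 1 = 2 * e := by omega
    have h2 : (p - 1) * N = 2 * (e * N) := by rw [he, mul_assoc]
    omega
  have hpdiv2 : p / 2 = e := by omega
  have hdich : t ^ e = 1 ∨ t ^ e = -1 := by
    have hsq : t ^ e * t ^ e = 1 := by
      rw [← pow_add]
      have : e + e = p - 1 := by omega
      rw [this]
      exact ZMod.pow_card_sub_one_eq_one ht
    exact mul_self_eq_one_iff.mp hsq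
  have hiff : IsSquare (algebraMap (ZMod p) F t) ↔ IsSquare t := by
    rw [FiniteField.isSquare_iff hrF2 ht', FiniteField.isSquare_iff hrZ2 ht, ZMod.card, hcard,
      hq2, hpdiv2, pow_mul, ← map_pow]
    rcases hdich with h1 | h1
    · rw [h1]; simp
    · rw [h1, map_neg, map_one, Odd.neg_one_pow (Nat.odd_iff.mpr hNodd)]
      constructor
      · intro h; exact absurd h (Ring.neg_one_ne_one_of_char_ne_two hrF2)
      · intro h; exact absurd h (Ring.neg_one_ne_one_of_char_ne_two hrZ2)
  by_cases hs : IsSquare t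
  · rw [(quadraticChar_one_iff_isSquare ht').mpr (hiff.mpr hs),
      (quadraticChar_one_iff_isSquare ht).mpr hs]
  · rw [quadraticChar_neg_one_iff_not_isSquare.mpr (fun h => hs (hiff.mp h)),
      quadraticChar_neg_one_iff_not_isSquare.mpr hs]




lemma TT_smul (hodd : p ≠ 2) (hm : Odd m) (hcard : Fintype.card F = p ^ m)
    {t : ZMod p} (s : ZMod p) (ht : t ≠ 0) :
    TT p F (t * s) = quadraticChar (ZMod p) t * TT p F s := by
  have ht' : algebraMap (ZMod p) F t ≠ 0 := by
    simpa using (algebraMap (ZMod p) F).injective.ne_iff.mpr ht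
  rw [TT, TT, Finset.mul_sum]
  apply Finset.sum_bij' (i := fun z _ => (algebraMap (ZMod p) F t)⁻¹ * z)
    (j := fun z _ => algebraMap (ZMod p) F t * z)
  · intro a ha
    simp only [mem_filter, mem_univ, true_and] at ha ⊢
    rw [← map_inv₀, ← Algebra.smul_def, map_smul, ha, smul_eq_mul, ← mul_assoc,
      inv_mul_cancel₀ ht, one_mul]
  · intro a ha
    simp only [mem_filter, mem_univ, true_and] at ha ⊢
    rw [← Algebra.smul_def, map_smul, ha, smul_eq_mul]
  · intro a _; rw [← mul_assoc, mul_inv_cancel₀ ht', one_mul]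
  · intro a _; rw [← mul_assoc, inv_mul_cancel₀ ht', one_mul]
  · intro a ha
    rw [← char_compat hodd hm hcard t]
    rw [← map_mul, ← mul_assoc, mul_inv_cancel₀ ht', one_mul]

lemma TT_eq (hodd : p ≠ 2) (hm : Odd m) (hcard : Fintype.card F = p ^ m)
    (s : ZMod p) (hs : s ≠ 0) : TT p F s = quadraticChar (ZMod p) s * TT p F 1 := by
  have := TT_smul hodd hm hcard (t := s) 1 hs
  rwa [mul_one] at this

lemma TT_zero (hodd : p ≠ 2) (hm : Odd m) (hcard : Fintype.card F = p ^ m) :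
    TT p F 0 = 0 := by
  have hrF2 : ringChar F ≠ 2 := by rw [ringChar_F (p := p)]; exact hodd
  have hrZ2 : ringChar (ZMod p) ≠ 2 := by rw [ZMod.ringChar_zmod_n p]; exact hodd
  have h1 : ∑ s : ZMod p, TT p F s = 0 := by
    rw [← quadraticChar_sum_zero hrF2]
    simp_rw [TT]
    exact Finset.sum_fiberwise univ (fun z => Algebra.trace (ZMod p) F z)
      (fun z => (quadraticChar F z : ℤ))
  have hsplit : ∑ s : ZMod p, TT p F s
      = ∑ s ∈ univ.filter (fun s : ZMod p => s = 0), TT p F s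
      + ∑ s ∈ univ.filter (fun s : ZMod p => ¬ s = 0), TT p F s :=
    (Finset.sum_filter_add_sum_filter_not univ _ _).symm
  have hfe : univ.filter (fun s : ZMod p => s = 0) = {0} := by
    ext x; simp
  have h2 : ∑ s ∈ univ.filter (fun s : ZMod p => ¬ s = 0), TT p F s
      = (∑ s ∈ univ.filter (fun s : ZMod p => ¬ s = 0), (quadraticChar (ZMod p) s : ℤ))
        * TT p F 1 := by
    rw [Finset.sum_mul]
    exact Finset.sum_congr rfl fun s hs => TT_eq hodd hm hcard s (by simpa using hs)
  have h3 : (∑ s ∈ univ.filter (fun s : ZMod p => ¬ s = 0), (quadraticChar (ZMod p) s : ℤ)) = 0 := by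
    have := quadraticChar_sum_zero hrZ2
    have hall : ∑ s : ZMod p, (quadraticChar (ZMod p) s : ℤ)
        = ∑ s ∈ univ.filter (fun s : ZMod p => s = 0), (quadraticChar (ZMod p) s : ℤ)
        + ∑ s ∈ univ.filter (fun s : ZMod p => ¬ s = 0), (quadraticChar (ZMod p) s : ℤ) :=
      (Finset.sum_filter_add_sum_filter_not univ _ _).symm
    rw [this, hfe] at hall
    simpa using hall.symm
  rw [hsplit, hfe, h2, h3, zero_mul, add_zero] at h1
  simpa using h1


lemma eta_inv {z : F} (hz : z ≠ 0) : quadraticChar F z⁻¹ = quadraticChar F z := by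
  have h1 : quadraticChar F z⁻¹ * quadraticChar F z = 1 := by
    rw [← map_mul, inv_mul_cancel₀ hz, map_one]
  have h2 : quadraticChar F z * quadraticChar F z = 1 := by
    rw [← sq]; exact quadraticChar_sq_one hz
  exact mul_right_cancel₀
    (by rintro h; rw [h, mul_zero] at h2; exact one_ne_zero h2.symm) (h1.trans h2.symm)

lemma TT_sq_sum (hrF2 : ringChar F ≠ 2) (hcard : Fintype.card F = p ^ m) (hm : 0 < m)
    (hfib : ∀ s : ZMod p,
      (univ.filter fun z : F => Algebra.trace (ZMod p) F z = s).card = p ^ (m - 1)) :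
    ∑ s : ZMod p, (TT p F s) ^ 2 = (p : ℤ) ^ m - (p : ℤ) ^ (m - 1) := by
  classical
  have hq1 : 1 ≤ Fintype.card F := Fintype.card_pos
  have hpm1 : 1 ≤ p ^ (m - 1) := Nat.one_le_pow _ _ (Fact.out : p.Prime).pos
  -- step 1: expand squares
  have step1 : ∑ s : ZMod p, (TT p F s) ^ 2
      = ∑ z : F, ∑ w ∈ univ.filter fun w : F => Algebra.trace (ZMod p) F w = Algebra.trace (ZMod p) F z,
          (quadraticChar F z : ℤ) * quadraticChar F w := by
    rw [← Finset.sum_fiberwise univ (fun z : F => Algebra.trace (ZMod p) F z)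
      (fun z : F => ∑ w ∈ univ.filter fun w : F => Algebra.trace (ZMod p) F w = Algebra.trace (ZMod p) F z,
        (quadraticChar F z : ℤ) * quadraticChar F w)]
    apply Finset.sum_congr rfl; intro s _
    rw [TT, sq, Finset.sum_mul_sum]
    apply Finset.sum_congr rfl; intro z hz
    simp only [mem_filter, mem_univ, true_and] at hz
    rw [← hz]
  -- step 2: drop z = 0
  have step2 : ∑ z : F, ∑ w ∈ univ.filter fun w : F => Algebra.trace (ZMod p) F w = Algebra.trace (ZMod p) F z,
          (quadraticChar F z : ℤ) * quadraticChar F w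
      = ∑ z ∈ univ.filter fun z : F => z ≠ 0,
          ∑ w ∈ univ.filter fun w : F => Algebra.trace (ZMod p) F w = Algebra.trace (ZMod p) F z,
          (quadraticChar F z : ℤ) * quadraticChar F w := by
    refine (Finset.sum_filter_of_ne fun z _ h => ?_).symm
    by_contra h0
    subst h0
    apply h
    simp [MulChar.map_zero]
  -- step 3: reindex inner sum by u = w / z
  have step3 : ∀ z : F, z ≠ 0 →
      (∑ w ∈ univ.filter fun w : F => Algebra.trace (ZMod p) F w = Algebra.trace (ZMod p) F z,
        (quadraticChar F z : ℤ) * quadraticChar F w)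
      = ∑ u ∈ univ.filter fun u : F => Algebra.trace (ZMod p) F ((u - 1) * z) = 0, (quadraticChar F u : ℤ) := by
    intro z hz
    apply Finset.sum_bij' (i := fun w _ => w * z⁻¹) (j := fun u _ => u * z)
    · intro w hw
      simp only [mem_filter, mem_univ, true_and] at hw ⊢
      rw [sub_mul, one_mul, mul_assoc, inv_mul_cancel₀ hz, mul_one, map_sub, hw, sub_self]
    · intro u hu
      simp only [mem_filter, mem_univ, true_and] at hu ⊢
      have heq : u * z - z = (u - 1) * z := by ring
      have h2 : Algebra.trace (ZMod p) F (u * z - z) = 0 := by rw [heq]; exact hu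
      rw [map_sub] at h2
      exact sub_eq_zero.mp h2
    · intro w _; rw [mul_assoc, inv_mul_cancel₀ hz, mul_one]
    · intro u _; rw [mul_assoc, mul_inv_cancel₀ hz, mul_one]
    · intro w _
      rw [map_mul, eta_inv hz]
      push_cast
      ring
  -- assemble
  rw [step1, step2, Finset.sum_congr rfl (fun z hz => step3 z (by simpa using hz))]
  have hswap : ∑ z ∈ univ.filter fun z : F => z ≠ 0,
      ∑ u ∈ univ.filter fun u : F => Algebra.trace (ZMod p) F ((u - 1) * z) = 0,
        (quadraticChar F u : ℤ)
      = ∑ u : F, (quadraticChar F u : ℤ) *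
          ((univ.filter fun z : F =>
            z ≠ 0 ∧ Algebra.trace (ZMod p) F ((u - 1) * z) = 0).card : ℤ) := by
    rw [Finset.sum_congr rfl (fun z _ => Finset.sum_filter _ _)]
    rw [Finset.sum_comm]
    apply Finset.sum_congr rfl
    intro u _
    rw [← Finset.sum_filter, Finset.filter_filter, Finset.sum_const, nsmul_eq_mul, mul_comm]
  rw [hswap]
  have hcount1 : (univ.filter fun z : F =>
      z ≠ 0 ∧ Algebra.trace (ZMod p) F (((1 : F) - 1) * z) = 0).card
      = Fintype.card F - 1 := by
    simp only [sub_self, zero_mul, map_zero, and_true]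
    rw [Finset.filter_ne', Finset.card_erase_of_mem (mem_univ 0), card_univ]
  have hcount0 : (univ.filter fun y : F => y ≠ 0 ∧ Algebra.trace (ZMod p) F y = 0).card
      = p ^ (m - 1) - 1 := by
    have heq : (univ.filter fun y : F => y ≠ 0 ∧ Algebra.trace (ZMod p) F y = 0)
        = (univ.filter fun y : F => Algebra.trace (ZMod p) F y = 0).erase 0 := by
      ext y
      simp only [mem_filter, mem_univ, true_and, Finset.mem_erase]
    rw [heq, Finset.card_erase_of_mem, hfib 0]
    simp only [mem_filter, mem_univ, true_and, map_zero]
  have hcountu : ∀ u : F, u ≠ 1 →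
      (univ.filter fun z : F => z ≠ 0 ∧ Algebra.trace (ZMod p) F ((u - 1) * z) = 0).card
      = p ^ (m - 1) - 1 := by
    intro u hu
    have hu1 : u - 1 ≠ 0 := sub_ne_zero.mpr hu
    rw [← hcount0]
    apply Finset.card_bij' (fun z _ => (u - 1) * z) (fun y _ => (u - 1)⁻¹ * y)
    · intro z hz; simp only [mem_filter, mem_univ, true_and] at hz ⊢
      exact ⟨mul_ne_zero hu1 hz.1, hz.2⟩
    · intro y hy; simp only [mem_filter, mem_univ, true_and] at hy ⊢
      refine ⟨mul_ne_zero (inv_ne_zero hu1) hy.1, ?_⟩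
      rw [← mul_assoc, mul_inv_cancel₀ hu1, one_mul]; exact hy.2
    · intro z _; rw [← mul_assoc, inv_mul_cancel₀ hu1, one_mul]
    · intro y _; rw [← mul_assoc, mul_inv_cancel₀ hu1, one_mul]
  have hfinal : ∀ u : F, (quadraticChar F u : ℤ) *
      ((univ.filter fun z : F =>
        z ≠ 0 ∧ Algebra.trace (ZMod p) F ((u - 1) * z) = 0).card : ℤ)
      = (quadraticChar F u : ℤ) * ((p : ℤ) ^ (m - 1) - 1)
        + (if u = (1 : F) then (p : ℤ) ^ m - (p : ℤ) ^ (m - 1) else 0) := by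
    intro u
    by_cases hu : u = 1
    · subst hu
      rw [hcount1, if_pos rfl, map_one, Nat.cast_sub hq1, hcard]
      push_cast
      ring
    · rw [hcountu u hu, if_neg hu, Nat.cast_sub hpm1]
      push_cast
      ring
  rw [Finset.sum_congr rfl (fun u _ => hfinal u), Finset.sum_add_distrib, ← Finset.sum_mul,
    quadraticChar_sum_zero hrF2, zero_mul, zero_add, Finset.sum_ite_eq' univ (1 : F)]
  simp


lemma TT_one_sq (hodd : p ≠ 2) (hm : Odd m) (hcard : Fintype.card F = p ^ m) :
    (TT p F 1) ^ 2 = (p : ℤ) ^ (m - 1) := by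
  have hp := (Fact.out : p.Prime)
  have hrF2 : ringChar F ≠ 2 := by rw [ringChar_F (p := p)]; exact hodd
  have hm0 : 0 < m := hm.pos
  have h := TT_sq_sum hrF2 hcard hm0 (fiber_card hcard hm0)
  have hterm : ∀ s : ZMod p, (TT p F s) ^ 2
      = ((quadraticChar (ZMod p) s : ℤ)) ^ 2 * (TT p F 1) ^ 2 := by
    intro s
    by_cases hs : s = 0
    · subst hs
      rw [TT_zero hodd hm hcard, MulChar.map_zero]
      ring
    · rw [TT_eq hodd hm hcard s hs]; ring
  rw [Finset.sum_congr rfl (fun s _ => hterm s), ← Finset.sum_mul] at h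
  have hchi : ∑ s : ZMod p, ((quadraticChar (ZMod p) s : ℤ)) ^ 2 = (p : ℤ) - 1 := by
    have hterm2 : ∀ s : ZMod p, ((quadraticChar (ZMod p) s : ℤ)) ^ 2
        = 1 - (if s = (0 : ZMod p) then (1 : ℤ) else 0) := by
      intro s
      by_cases hs : s = 0
      · subst hs; rw [MulChar.map_zero, if_pos rfl]; ring
      · rw [quadraticChar_sq_one hs, if_neg hs]; ring
    rw [Finset.sum_congr rfl (fun s _ => hterm2 s), Finset.sum_sub_distrib,
      Finset.sum_ite_eq' univ (0 : ZMod p) (fun _ => (1 : ℤ)), if_pos (mem_univ _),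
      Finset.sum_const, Finset.card_univ, ZMod.card]
    simp
  rw [hchi] at h
  have hpow : (p : ℤ) ^ m - (p : ℤ) ^ (m - 1) = ((p : ℤ) - 1) * (p : ℤ) ^ (m - 1) := by
    have h0 : (p : ℤ) ^ m = (p : ℤ) * (p : ℤ) ^ (m - 1) := by
      conv_lhs => rw [show m = (m - 1) + 1 by omega]
      rw [pow_succ]; ring
    rw [h0]; ring
  rw [hpow] at h
  have hne : ((p : ℤ) - 1) ≠ 0 := by
    have : (2 : ℤ) ≤ (p : ℤ) := by exact_mod_cast hp.two_le
    omega
  exact mul_left_cancel₀ hne h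

lemma TT_vals (hodd : p ≠ 2) (hm : Odd m) (hcard : Fintype.card F = p ^ m) (s : ZMod p) :
    TT p F s = 0 ∨ TT p F s = (p : ℤ) ^ ((m - 1) / 2) ∨ TT p F s = -(p : ℤ) ^ ((m - 1) / 2) := by
  by_cases hs : s = 0
  · left; subst hs; exact TT_zero hodd hm hcard
  right
  have hmod := Nat.odd_iff.mp hm
  have h1 : (TT p F 1) ^ 2 = ((p : ℤ) ^ ((m - 1) / 2)) ^ 2 := by
    rw [TT_one_sq hodd hm hcard, ← pow_mul]
    congr 1
    omega
  have h2 : TT p F 1 = (p : ℤ) ^ ((m - 1) / 2) ∨ TT p F 1 = -(p : ℤ) ^ ((m - 1) / 2) := by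
    have hfact : (TT p F 1 - (p : ℤ) ^ ((m - 1) / 2)) * (TT p F 1 + (p : ℤ) ^ ((m - 1) / 2)) = 0 := by
      linear_combination h1
    rcases mul_eq_zero.mp hfact with h | h
    · left; linarith
    · right; linarith
  have h3 : quadraticChar (ZMod p) s = 1 ∨ quadraticChar (ZMod p) s = -1 :=
    quadraticChar_dichotomy hs
  rw [TT_eq hodd hm hcard s hs]
  rcases h3 with h3 | h3 <;> rcases h2 with h2 | h2 <;> rw [h3, h2] <;> simp


lemma TT_exists (hodd : p ≠ 2) (hm : Odd m) (hcard : Fintype.card F = p ^ m) :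
    ∃ s : ZMod p, s ≠ 0 ∧ TT p F s = (p : ℤ) ^ ((m - 1) / 2) := by
  have hp := (Fact.out : p.Prime)
  haveI : Fact (1 < p) := ⟨hp.one_lt⟩
  have hrZ2 : ringChar (ZMod p) ≠ 2 := by rw [ZMod.ringChar_zmod_n p]; exact hodd
  have h1 := TT_one_sq hodd hm hcard
  have hmod := Nat.odd_iff.mp hm
  have hppos : (0 : ℤ) < (p : ℤ) := by exact_mod_cast hp.pos
  have hpk : (0 : ℤ) < (p : ℤ) ^ ((m - 1) / 2) := by positivity
  have h2 : TT p F 1 = (p : ℤ) ^ ((m - 1) / 2) ∨ TT p F 1 = -(p : ℤ) ^ ((m - 1) / 2) := by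
    have h1' : (TT p F 1) ^ 2 = ((p : ℤ) ^ ((m - 1) / 2)) ^ 2 := by
      rw [h1, ← pow_mul]; congr 1; omega
    have hfact : (TT p F 1 - (p : ℤ) ^ ((m - 1) / 2)) * (TT p F 1 + (p : ℤ) ^ ((m - 1) / 2)) = 0 := by
      linear_combination h1'
    rcases mul_eq_zero.mp hfact with h | h
    · left; linarith
    · right; linarith
  have hone : (1 : ZMod p) ≠ 0 := one_ne_zero
  rcases h2 with h2 | h2
  · exact ⟨1, hone, h2⟩
  · obtain ⟨t, ht⟩ := FiniteField.exists_nonsquare hrZ2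
    have ht0 : t ≠ 0 := fun h => ht (h ▸ ⟨0, by simp⟩)
    have hchit : quadraticChar (ZMod p) t = -1 :=
      quadraticChar_neg_one_iff_not_isSquare.mpr ht
    refine ⟨t, ht0, ?_⟩
    have := TT_smul hodd hm hcard (t := t) 1 ht0
    rw [mul_one] at this
    rw [this, hchit, h2]
    ring

lemma count_quad (hodd : p ≠ 2) (hm : Odd m) (hcard : Fintype.card F = p ^ m)
    {a : F} (ha : a ≠ 0) (s : ZMod p) :
    ((univ.filter fun y : F => Algebra.trace (ZMod p) F (a * y ^ 2) = s).card : ℤ)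
      = (p : ℤ) ^ (m - 1) + quadraticChar F a * TT p F s := by
  have hrF2 : ringChar F ≠ 2 := by rw [ringChar_F (p := p)]; exact hodd
  have hm0 : 0 < m := hm.pos
  have hcards : (univ.filter fun y : F => Algebra.trace (ZMod p) F (a * y ^ 2) = s).card
      = ∑ z ∈ univ.filter (fun z : F => Algebra.trace (ZMod p) F z = s),
          ((univ.filter fun y : F => Algebra.trace (ZMod p) F (a * y ^ 2) = s).filter
            (fun y => a * y ^ 2 = z)).card :=
    Finset.card_eq_sum_card_fiberwise (fun y hy => by
      simp only [Finset.mem_coe, mem_filter, mem_univ, true_and] at hy ⊢; exact hy)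
  have hfilter : ∀ z ∈ univ.filter (fun z : F => Algebra.trace (ZMod p) F z = s),
      ((univ.filter fun y : F => Algebra.trace (ZMod p) F (a * y ^ 2) = s).filter
        (fun y => a * y ^ 2 = z))
      = univ.filter fun y : F => a * y ^ 2 = z := by
    intro z hz
    simp only [mem_filter, mem_univ, true_and] at hz
    ext y
    simp only [mem_filter, mem_univ, true_and, Finset.filter_filter]
    constructor
    · rintro ⟨_, h2⟩; exact h2
    · intro h; exact ⟨by rw [h, hz], h⟩
  have hsq : ∀ z : F, ((univ.filter fun y : F => a * y ^ 2 = z).card : ℤ)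
      = quadraticChar F (a⁻¹ * z) + 1 := by
    intro z
    have hcs := quadraticChar_card_sqrts hrF2 (a⁻¹ * z)
    rw [← hcs]
    congr 1
    have : {x : F | x ^ 2 = a⁻¹ * z}.toFinset = univ.filter fun y : F => a * y ^ 2 = z := by
      ext y
      simp only [Set.mem_toFinset, Set.mem_setOf_eq, mem_filter, mem_univ, true_and]
      constructor
      · intro h; rw [h, ← mul_assoc, mul_inv_cancel₀ ha, one_mul]
      · intro h; rw [← h, ← mul_assoc, inv_mul_cancel₀ ha, one_mul]
    rw [this]
  have hfilter' : ∀ z ∈ univ.filter (fun z : F => Algebra.trace (ZMod p) F z = s),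
      ((univ.filter fun y : F => Algebra.trace (ZMod p) F (a * y ^ 2) = s).filter
        (fun y => a * y ^ 2 = z)).card
      = (univ.filter fun y : F => a * y ^ 2 = z).card := fun z hz => by rw [hfilter z hz]
  rw [hcards, Finset.sum_congr rfl hfilter']
  push_cast
  rw [Finset.sum_congr rfl (fun z _ => hsq z), Finset.sum_add_distrib, Finset.sum_const,
    fiber_card hcard hm0 s]
  have hterm : ∀ z : F, (quadraticChar F (a⁻¹ * z) : ℤ)
      = quadraticChar F a * quadraticChar F z := by
    intro z
    rw [map_mul, eta_inv ha]
  rw [Finset.sum_congr rfl (fun z _ => hterm z), ← Finset.mul_sum]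
  simp only [TT]
  push_cast
  ring

lemma zeros_shift (hodd : p ≠ 2) {a : F} (ha : a ≠ 0) (b : F) :
    (univ.filter fun x : F => Algebra.trace (ZMod p) F (a * x ^ 2 + b * x) = 0).card
    = (univ.filter fun y : F => Algebra.trace (ZMod p) F (a * y ^ 2)
        = Algebra.trace (ZMod p) F (a * (b / (2 * a)) ^ 2)).card := by
  have hrF2 : ringChar F ≠ 2 := by rw [ringChar_F (p := p)]; exact hodd
  have h2 : (2 : F) ≠ 0 := Ring.two_ne_zero hrF2
  have h2a : 2 * a ≠ 0 := mul_ne_zero h2 ha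
  have hkey : ∀ x : F, a * (x + b / (2 * a)) ^ 2
      = (a * x ^ 2 + b * x) + a * (b / (2 * a)) ^ 2 := by
    intro x
    field_simp
    ring
  apply Finset.card_bij' (fun x _ => x + b / (2 * a)) (fun y _ => y - b / (2 * a))
  · intro x hx
    simp only [mem_filter, mem_univ, true_and] at hx ⊢
    rw [hkey x, map_add, hx, zero_add]
  · intro y hy
    simp only [mem_filter, mem_univ, true_and] at hy ⊢
    have := hkey (y - b / (2 * a))
    rw [sub_add_cancel] at this
    rw [this, map_add] at hy
    have := add_right_cancel (hy.trans (zero_add _).symm)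
    exact this
  · intro x _; ring
  · intro y _; ring

lemma linear_count (hcard : Fintype.card F = p ^ m) (hm0 : 0 < m) {b : F} (hb : b ≠ 0) :
    (univ.filter fun x : F => Algebra.trace (ZMod p) F (b * x) = 0).card = p ^ (m - 1) := by
  rw [← fiber_card hcard hm0 (0 : ZMod p)]
  apply Finset.card_bij' (fun x _ => b * x) (fun y _ => b⁻¹ * y)
  · intro x hx; simp only [mem_filter, mem_univ, true_and] at hx ⊢; exact hx
  · intro y hy; simp only [mem_filter, mem_univ, true_and] at hy ⊢
    rw [← mul_assoc, mul_inv_cancel₀ hb, one_mul]; exact hy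
  · intro x _; rw [← mul_assoc, inv_mul_cancel₀ hb, one_mul]
  · intro y _; rw [← mul_assoc, mul_inv_cancel₀ hb, one_mul]

lemma weight_card (g : F → ZMod p) (hg0 : g 0 = 0) :
    Nat.card {x : {x : F // x ≠ 0} // g x.val ≠ 0}
      = Fintype.card F - (univ.filter fun x : F => g x = 0).card := by
  have e : {x : {x : F // x ≠ 0} // g x.val ≠ 0} ≃ {x : F // g x ≠ 0} :=
    { toFun := fun x => ⟨x.1.1, x.2⟩
      invFun := fun x => ⟨⟨x.1, fun h => x.2 (by rw [h]; exact hg0)⟩, x.2⟩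
      left_inv := fun x => rfl
      right_inv := fun x => rfl }
  rw [Nat.card_congr e, Nat.card_eq_fintype_card, Fintype.card_subtype]
  have hsplit := Finset.card_filter_add_card_filter_not
    (s := (univ : Finset F)) (p := fun x : F => g x = 0)
  rw [Finset.card_univ] at hsplit
  have hco : (univ.filter fun x : F => g x ≠ 0).card
      = (univ.filter fun x : F => ¬ g x = 0).card := rfl
  rw [hco]
  omega


lemma weight_card' (a b : F) :
    Nat.card {x : {x : F // x ≠ 0} //
        (fun x : {x : F // x ≠ 0} =>
          Algebra.trace (ZMod p) F (a * x.val ^ 2 + b * x.val)) x ≠ 0}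
      = Fintype.card F
        - (univ.filter fun x : F =>
            Algebra.trace (ZMod p) F (a * x ^ 2 + b * x) = 0).card := by
  exact weight_card (fun x : F => Algebra.trace (ZMod p) F (a * x ^ 2 + b * x)) (by simp)

end

/-- for `p` odd and `m` odd, the minimum distance of
`C = {(Tr(ax² + bx))_{x ∈ F_q^*} : a, b ∈ F_q}` is `(p-1)p^{m-1} - p^{(m-1)/2}`. -/
theorem stmt_9 (p m : ℕ) (hp : p.Prime) (hodd : p ≠ 2) (hm : Odd m)
    (F : Type*) [Field F] [Fintype F] [Algebra (ZMod p) F]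
    (hcard : Fintype.card F = p ^ m)
    (C : Submodule (ZMod p) ({x : F // x ≠ 0} → ZMod p))
    (hC : (C : Set ({x : F // x ≠ 0} → ZMod p)) =
      {w | ∃ a b : F, w = fun x => Algebra.trace (ZMod p) F (a * x.val ^ 2 + b * x.val)}) :
    sInf {w : ℕ | ∃ c ∈ C, c ≠ 0 ∧ w = Nat.card {x : {x : F // x ≠ 0} // c x ≠ 0}}
      = (p - 1) * p ^ (m - 1) - p ^ ((m - 1) / 2) := by
  classical
  haveI : Fact p.Prime := ⟨hp⟩
  have hmod := Nat.odd_iff.mp hm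
  have hm0 : 0 < m := hm.pos
  have hp2 : 2 ≤ p := hp.two_le
  have hp3 : 3 ≤ p := by omega
  set k := (m - 1) / 2 with hkdef
  set X := p ^ (m - 1) with hXdef
  set Q := p ^ m with hQdef
  set K := p ^ k with hKdef
  -- basic nat arithmetic
  have hQX : Q = p * X := by
    rw [hQdef, hXdef]
    conv_lhs => rw [← Nat.succ_pred_eq_of_pos hm0]
    rw [pow_succ, mul_comm]
    rfl
  have hKX : K ≤ X := Nat.pow_le_pow_right hp.one_lt.le (by omega)
  have h3X : 3 * X ≤ Q := by
    rw [hQX]; exact Nat.mul_le_mul_right X hp3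
  have hX1 : 1 ≤ X := Nat.one_le_pow _ _ hp.pos
  have hK1 : 1 ≤ K := Nat.one_le_pow _ _ hp.pos
  have hPX : (p - 1) * X = Q - X := by
    rw [Nat.sub_mul, one_mul, ← hQX]
  have hKint : (0 : ℤ) ≤ (p : ℤ) ^ k := by positivity
  -- weights of codewords
  have hZfor : ∀ a b : F, a ≠ 0 →
      ((univ.filter fun x : F =>
          Algebra.trace (ZMod p) F (a * x ^ 2 + b * x) = 0).card : ℤ)
        = (p : ℤ) ^ (m - 1)
          + quadraticChar F a * TT p F (Algebra.trace (ZMod p) F (a * (b / (2 * a)) ^ 2)) := by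
    intro a b ha
    rw [zeros_shift hodd ha b]
    exact count_quad hodd hm hcard ha _
  have hZbound : ∀ a b : F, a ≠ 0 →
      (univ.filter fun x : F =>
        Algebra.trace (ZMod p) F (a * x ^ 2 + b * x) = 0).card ≤ X + K := by
    intro a b ha
    have h1 := hZfor a b ha
    have h2 := TT_vals hodd hm hcard (Algebra.trace (ZMod p) F (a * (b / (2 * a)) ^ 2))
    have h3 := quadraticChar_dichotomy ha
    have hcast : ((X + K : ℕ) : ℤ) = (p : ℤ) ^ (m - 1) + (p : ℤ) ^ k := by
      push_cast [hXdef, hKdef]; ring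
    have : ((univ.filter fun x : F =>
        Algebra.trace (ZMod p) F (a * x ^ 2 + b * x) = 0).card : ℤ) ≤ ((X + K : ℕ) : ℤ) := by
      rw [h1, hcast]
      rcases h2 with h2 | h2 | h2 <;> rcases h3 with h3 | h3 <;> rw [h2, h3] <;> linarith
    exact_mod_cast this
  -- the optimal codeword
  obtain ⟨sstar, hsne, hsval⟩ := TT_exists (F := F) hodd hm hcard
  have h2ne : (2 : F) ≠ 0 := by
    have hrF2 : ringChar F ≠ 2 := by rw [ringChar_F (p := p)]; exact hodd
    exact Ring.two_ne_zero hrF2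
  have h4ne : ((2 : F)⁻¹ * (2 : F)⁻¹) ≠ 0 := mul_ne_zero (inv_ne_zero h2ne) (inv_ne_zero h2ne)
  have hb : ∃ b : F, Algebra.trace (ZMod p) F (((2 : F)⁻¹ * (2 : F)⁻¹) * b ^ 2) = sstar := by
    have hcount := count_quad hodd hm hcard h4ne sstar
    have heta4 : quadraticChar F ((2 : F)⁻¹ * (2 : F)⁻¹) = 1 := by
      rw [map_mul]
      have := quadraticChar_dichotomy (inv_ne_zero h2ne)
      rcases this with h | h <;> rw [h] <;> norm_num
    rw [heta4, one_mul, hsval] at hcount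
    have hpos : (0 : ℤ) <
        ((univ.filter fun y : F =>
          Algebra.trace (ZMod p) F (((2 : F)⁻¹ * (2 : F)⁻¹) * y ^ 2) = sstar).card : ℤ) := by
      rw [hcount]
      have : (0 : ℤ) < (p : ℤ) ^ (m - 1) := by positivity
      linarith
    have : (univ.filter fun y : F =>
        Algebra.trace (ZMod p) F (((2 : F)⁻¹ * (2 : F)⁻¹) * y ^ 2) = sstar).card ≠ 0 := by
      by_contra h0
      rw [h0] at hpos
      simp at hpos
    obtain ⟨y, hy⟩ := Finset.card_ne_zero.mp this
    simp only [mem_filter, mem_univ, true_and] at hy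
    exact ⟨y, hy⟩
  obtain ⟨b0, hb0⟩ := hb
  have hZgood : (univ.filter fun x : F =>
      Algebra.trace (ZMod p) F (1 * x ^ 2 + b0 * x) = 0).card = X + K := by
    have h1 := hZfor 1 b0 one_ne_zero
    have heq : (1 : F) * (b0 / (2 * 1)) ^ 2 = ((2 : F)⁻¹ * (2 : F)⁻¹) * b0 ^ 2 := by
      rw [one_mul, mul_one, div_eq_mul_inv]
      ring
    rw [heq, hb0, hsval, map_one, one_mul] at h1
    have hcast : ((X + K : ℕ) : ℤ) = (p : ℤ) ^ (m - 1) + (p : ℤ) ^ k := by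
      push_cast [hXdef, hKdef]; ring
    have : ((univ.filter fun x : F =>
        Algebra.trace (ZMod p) F (1 * x ^ 2 + b0 * x) = 0).card : ℤ) = ((X + K : ℕ) : ℤ) := by
      rw [h1, hcast]
    exact_mod_cast this
  -- the good codeword
  set c0 : {x : F // x ≠ 0} → ZMod p :=
    fun x => Algebra.trace (ZMod p) F (1 * x.val ^ 2 + b0 * x.val) with hc0def
  have hw0 : Nat.card {x : {x : F // x ≠ 0} // c0 x ≠ 0} = (p - 1) * X - K := by
    rw [hc0def]
    rw [weight_card' 1 b0, hZgood, hcard, hPX]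
    omega
  have hc0C : c0 ∈ C := by
    rw [← SetLike.mem_coe, hC]
    exact ⟨1, b0, rfl⟩
  have htargetpos : 0 < (p - 1) * X - K := by
    rw [hPX]; omega
  have hc0ne : c0 ≠ 0 := by
    intro h0
    have : Nat.card {x : {x : F // x ≠ 0} // c0 x ≠ 0} = 0 := by
      have : ∀ x : {x : F // x ≠ 0}, ¬ (c0 x ≠ 0) := by
        intro x
        rw [h0]
        simp
      rw [Nat.card_eq_zero]
      left
      rw [← not_nonempty_iff]
      rintro ⟨⟨x, hx⟩⟩
      exact this x hx
    omega
  have hmem : (p - 1) * X - K ∈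
      {w : ℕ | ∃ c ∈ C, c ≠ 0 ∧ w = Nat.card {x : {x : F // x ≠ 0} // c x ≠ 0}} :=
    ⟨c0, hc0C, hc0ne, hw0.symm⟩
  apply le_antisymm
  · exact Nat.sInf_le hmem
  · apply le_csInf ⟨_, hmem⟩
    rintro w ⟨c, hcC, hcne, rfl⟩
    have hcmem : c ∈ (C : Set ({x : F // x ≠ 0} → ZMod p)) := hcC
    rw [hC] at hcmem
    obtain ⟨a, b, hab⟩ := hcmem
    subst hab
    rw [weight_card' a b, hcard]
    by_cases ha : a = 0
    · by_cases hbz : b = 0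
      · exfalso
        apply hcne
        funext x
        rw [ha, hbz]
        simp
      · subst ha
        have hlin : (univ.filter fun x : F =>
            Algebra.trace (ZMod p) F (0 * x ^ 2 + b * x) = 0).card = X := by
          have hfe : (univ.filter fun x : F =>
              Algebra.trace (ZMod p) F (0 * x ^ 2 + b * x) = 0)
              = univ.filter fun x : F => Algebra.trace (ZMod p) F (b * x) = 0 := by
            apply Finset.filter_congr
            intro x _
            rw [show (0 : F) * x ^ 2 + b * x = b * x from by ring]
          rw [hXdef, hfe, linear_count hcard hm0 hbz]
        rw [hlin]
        omega
    · have := hZbound a b ha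
      omega
end

section
/- Let p be an odd prime and q = p^m. For every polynomial f ∈ F_q[x] of degree 2, the number of pairs (α, y) ∈ F_q × F_q with y^p - y = f(α) is at most q + p^{(m+1)/2} if m is odd, and at most q + (p-1)p^{m/2} if m is even. -/
private lemma aux_geom_nat {p : ℕ} (hp1 : 1 ≤ p) (m : ℕ) :
    (p - 1) * ∑ i ∈ Finset.range m, p ^ i = p ^ m - 1 := by
  have h := mul_geom_sum (p : ℤ) m
  refine Int.natCast_inj.mp ?_
  push_cast [Nat.cast_sub hp1, Nat.cast_sub (Nat.one_le_pow m p (by omega))]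
  push_cast at h
  linarith

private lemma aux_pow_div_two {p : ℕ} (hp2 : p % 2 = 1) (hp1 : 1 < p) (m : ℕ) :
    p ^ m / 2 = (p / 2) * ∑ i ∈ Finset.range m, p ^ i := by
  have hg := aux_geom_nat (le_of_lt hp1) m
  have h1 : 1 ≤ p ^ m := Nat.one_le_pow _ _ (by omega)
  have h3 : p - 1 = 2 * (p / 2) := by omega
  rw [h3, mul_assoc] at hg
  omega

private lemma aux_odd_geom_sum {p m : ℕ} (hp : p % 2 = 1) (hm : Odd m) :
    (∑ i ∈ Finset.range m, p ^ i) % 2 = 1 := by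
  have h : (∑ i ∈ Finset.range m, p ^ i) % 2 = (∑ i ∈ Finset.range m, 1 % 2) % 2 := by
    rw [Finset.sum_nat_mod]
    congr 1
    refine Finset.sum_congr rfl fun i _ => ?_
    rw [Nat.pow_mod, hp, one_pow]
  rw [h, Finset.sum_const, Finset.card_range, smul_eq_mul]
  have := Nat.odd_iff.mp hm
  omega

private lemma aux_pow_pow_eq {F : Type*} [Monoid F] {x : F} {p : ℕ} (h : x ^ p = x) (k : ℕ) :
    x ^ (p ^ k) = x := by
  induction k with
  | zero => simp
  | succ k ih => rw [pow_succ, pow_mul, ih, h]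

private lemma aux_trace_frob {p : ℕ} [Fact p.Prime] {F : Type*} [Field F] [Fintype F]
    [CharP F p] [Algebra (ZMod p) F] (z : F) :
    Algebra.trace (ZMod p) F (z ^ p) = Algebra.trace (ZMod p) F z := by
  have hinj : Function.Injective (algebraMap (ZMod p) F) := (algebraMap (ZMod p) F).injective
  apply hinj
  rw [trace_eq_sum_automorphisms, trace_eq_sum_automorphisms]
  -- frobenius as an AlgEquiv
  have hcomm : ∀ c : ZMod p, (frobenius F p) (algebraMap (ZMod p) F c) = algebraMap (ZMod p) F c := by
    intro c
    rw [frobenius_def, ← map_pow, ZMod.pow_card]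
  have hbij : Function.Bijective (frobenius F p) :=
    (Finite.injective_iff_bijective).mp (frobenius_inj F p)
  let eh : F →ₐ[ZMod p] F := { toRingHom := (frobenius F p), commutes' := hcomm }
  let e : F ≃ₐ[ZMod p] F := AlgEquiv.ofBijective eh hbij
  have he : ∀ x : F, e x = x ^ p := fun x => rfl
  calc ∑ σ : F ≃ₐ[ZMod p] F, σ (z ^ p)
      = ∑ σ : F ≃ₐ[ZMod p] F, (σ * e) z := by
        refine Finset.sum_congr rfl fun σ _ => ?_
        show σ (z ^ p) = σ (e z)
        rw [he]
    _ = ∑ σ : F ≃ₐ[ZMod p] F, σ z :=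
        Fintype.sum_equiv (Equiv.mulRight e) _ _ (fun σ => rfl)

private lemma aux_char_transfer {p m : ℕ} [Fact p.Prime] (hp2 : p ≠ 2) (hm : Odd m)
    {F : Type*} [Field F] [Fintype F] [DecidableEq F] [CharP F p] [Algebra (ZMod p) F]
    (hcard : Fintype.card F = p ^ m) (j : ZMod p) :
    quadraticChar F (algebraMap (ZMod p) F j) = quadraticChar (ZMod p) j := by
  have hp : p.Prime := Fact.out
  have hodd : p % 2 = 1 := Nat.odd_iff.mp (hp.odd_of_ne_two hp2)
  have hrF : ringChar F = p := ringChar.eq F p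
  have hF2 : ringChar F ≠ 2 := by rw [hrF]; exact hp2
  by_cases hj : j = 0
  · simp [hj]
  · have hφj : algebraMap (ZMod p) F j ≠ 0 := fun h =>
      hj ((algebraMap (ZMod p) F).injective (by simp [h]))
    have hiff : IsSquare (algebraMap (ZMod p) F j) ↔ IsSquare j := by
      constructor
      · intro hsq
        by_contra hns
        have h1 : j ^ (p / 2) = -1 := by
          rcases ZMod.pow_div_two_eq_neg_one_or_one p hj with h | h
          · exact absurd ((ZMod.euler_criterion p hj).mpr h) hns
          · exact h
        have h2 : (algebraMap (ZMod p) F j) ^ (Fintype.card F / 2) = 1 :=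
          (FiniteField.isSquare_iff hF2 hφj).mp hsq
        have hdiv : Fintype.card F / 2 = (p / 2) * ∑ i ∈ Finset.range m, p ^ i := by
          rw [hcard]; exact aux_pow_div_two hodd hp.one_lt m
        have h3 : (algebraMap (ZMod p) F j) ^ (Fintype.card F / 2) = (-1 : F) := by
          rw [hdiv, pow_mul, ← map_pow, h1, map_neg, map_one]
          exact Odd.neg_one_pow (Nat.odd_iff.mpr (aux_odd_geom_sum hodd hm))
        rw [h2] at h3
        exact (Ring.neg_one_ne_one_of_char_ne_two hF2) h3.symm
      · rintro ⟨r, hr⟩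
        exact ⟨algebraMap (ZMod p) F r, by rw [hr, map_mul]⟩
    by_cases hs : IsSquare j
    · rw [(quadraticChar_one_iff_isSquare hj).mpr hs,
        (quadraticChar_one_iff_isSquare hφj).mpr (hiff.mpr hs)]
    · rw [quadraticChar_neg_one_iff_not_isSquare.mpr hs,
        quadraticChar_neg_one_iff_not_isSquare.mpr (fun h => hs (hiff.mp h))]

open Finset AddChar in
set_option maxHeartbeats 1000000 in
/-- for any `f ∈ F_q[x]` of degree 2, the number of pairs
`(α, y) ∈ F_q × F_q` with `y^p - y = f(α)` is at most `q + p^{(m+1)/2}` if `m` is odd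
and at most `q + (p-1)p^{m/2}` if `m` is even. -/
theorem stmt_10 (p m : ℕ) (hp : p.Prime) (hodd : p ≠ 2) (hm : 0 < m)
    (F : Type*) [Field F] [Fintype F] (hcard : Fintype.card F = p ^ m)
    (f : Polynomial F) (hf : f.natDegree = 2) :
    Nat.card {ay : F × F // ay.2 ^ p - ay.2 = f.eval ay.1}
      ≤ if Odd m then p ^ m + p ^ ((m + 1) / 2) else p ^ m + (p - 1) * p ^ (m / 2) := by
  classical
  haveI hpF : Fact p.Prime := ⟨hp⟩
  haveI : NeZero p := ⟨hp.ne_zero⟩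
  -- characteristic of F is p
  have hchar : CharP F p := by
    have hcF : CharP F (ringChar F) := ringChar.charP F
    obtain ⟨n, hrp, hn⟩ := FiniteField.card F (ringChar F)
    have hr : ringChar F = p := by
      have hdvd : ringChar F ∣ p ^ m := by
        rw [← hcard, hn]; exact dvd_pow_self _ (by exact_mod_cast n.ne_zero)
      exact (Nat.prime_dvd_prime_iff_eq hrp hp).mp (hrp.dvd_of_dvd_pow hdvd)
    rwa [hr] at hcF
  haveI := hchar
  have hrF : ringChar F = p := ringChar.eq F p
  have hF2 : ringChar F ≠ 2 := by rw [hrF]; exact hodd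
  letI : Algebra (ZMod p) F := ZMod.algebra F p
  have hφinj : Function.Injective (algebraMap (ZMod p) F) := (algebraMap (ZMod p) F).injective
  -- the additive character
  obtain ⟨ζ, hζ⟩ : ∃ ζ : ℂ, IsPrimitiveRoot ζ p := ⟨_, Complex.isPrimitiveRoot_exp p hp.ne_zero⟩
  have hζ1 : ζ ^ p = 1 := hζ.pow_eq_one
  set η : AddChar (ZMod p) ℂ := AddChar.zmodChar p hζ1 with hη_def
  have hηprim : η.IsPrimitive := AddChar.zmodChar_primitive_of_primitive_root p hζ
  set ψ : AddChar F ℂ := η.compAddMonoidHom (Algebra.trace (ZMod p) F).toAddMonoidHom with hψ_def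
  have hψ_apply : ∀ x : F, ψ x = η (Algebra.trace (ZMod p) F x) := fun x => rfl
  have hψprim : ψ.IsPrimitive := by
    refine AddChar.IsPrimitive.of_ne_one ?_
    have hex : ∃ b : F, Algebra.trace (ZMod p) F b ≠ 0 := by
      by_contra hcon
      push_neg at hcon
      refine one_ne_zero (α := F) ((traceForm_nondegenerate (ZMod p) F).1 1 fun y => ?_)
      rw [Algebra.traceForm_apply, one_mul]
      exact hcon y
    obtain ⟨b, hb⟩ := hex
    refine AddChar.ne_one_iff.mpr ⟨b, ?_⟩
    rw [hψ_apply]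
    exact fun hcon => hb ((hηprim.zmod_char_eq_one_iff p _).mp hcon)
  have hψnorm : ∀ x : F, ‖ψ x‖ = 1 := by
    intro x
    have hR : 0 < ringChar F := by rw [hrF]; exact hp.pos
    have := Complex.norm_eq_one_of_mem_rootsOfUnity (ψ.val_mem_rootsOfUnity x hR)
    rwa [IsUnit.unit_spec] at this
  -- key: ψ kills z^p - z
  have hψL : ∀ z : F, ψ (z ^ p - z) = 1 := by
    intro z
    rw [hψ_apply, map_sub, aux_trace_frob, sub_self, AddChar.map_zero_eq_one]
  -- quadratic character of F with values in ℂ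
  set χ : MulChar F ℂ := (quadraticChar F).ringHomComp (Int.castRingHom ℂ) with hχ_def
  have hχne : χ ≠ 1 :=
    (MulChar.ringHomComp_ne_one_iff (RingHom.injective_int _)).mpr (quadraticChar_ne_one hF2)
  have hχquad : χ.IsQuadratic := (quadraticChar_isQuadratic F).comp _
  have hχ_apply : ∀ x : F, χ x = ((quadraticChar F x : ℤ) : ℂ) := fun x => rfl
  have hχnorm : ∀ x : F, ‖χ x‖ ≤ 1 := by
    intro x
    rcases hχquad x with h | h | h <;> simp [h]
  have hχnorm1 : ∀ x : F, x ≠ 0 → ‖χ x‖ = 1 := by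
    intro x hx
    rcases hχquad x with h | h | h
    · exfalso
      have h0 : quadraticChar F x = 0 := by exact_mod_cast hχ_apply x ▸ h
      exact hx (quadraticChar_eq_zero_iff.mp h0)
    · simp [h]
    · simp [h]
  set G : ℂ := gaussSum χ ψ with hG_def
  have hq0 : ((p : ℂ) ^ m) ≠ 0 := pow_ne_zero _ (Nat.cast_ne_zero.mpr hp.ne_zero)
  have hGnorm : ‖G‖ = Real.sqrt (p ^ m) := by
    have hg2 : G ^ 2 = χ (-1) * Fintype.card F := gaussSum_sq hχne hχquad hψprim
    have hn1 : ‖χ (-1)‖ = 1 := hχnorm1 (-1) (neg_ne_zero.mpr one_ne_zero)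
    have : ‖G‖ ^ 2 = (p : ℝ) ^ m := by
      rw [← norm_pow, hg2, norm_mul, hn1, one_mul, hcard, Nat.cast_pow, norm_pow,
        Complex.norm_natCast]
    rw [← this, Real.sqrt_sq (norm_nonneg _)]
  -- counting as a complex sum
  set N : ℕ := Nat.card {ay : F × F // ay.2 ^ p - ay.2 = f.eval ay.1} with hN_def
  have hNsum : (N : ℂ) =
      ∑ ay : F × F, if ay.2 ^ p - ay.2 = f.eval ay.1 then (1 : ℂ) else 0 := by
    rw [hN_def, Nat.card_eq_fintype_card, Fintype.card_subtype, Finset.card_filter]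
    push_cast
    rfl
  have e1 : ∀ c : F, (∑ x : F, ψ (x * c)) = if c = 0 then ((p : ℂ) ^ m) else 0 := by
    intro c
    rw [AddChar.sum_mulShift c hψprim, hcard]
    push_cast
    rfl
  -- main expansion
  have step1 : ((p : ℂ) ^ m) * N =
      ∑ x : F, (∑ y : F, ψ (x * (y ^ p - y))) * (∑ α : F, ψ (-x * f.eval α)) := by
    calc ((p:ℂ)^m) * N
        = ∑ ay : F × F, if ay.2 ^ p - ay.2 - f.eval ay.1 = 0 then ((p:ℂ)^m) else 0 := by
          rw [hNsum, Finset.mul_sum]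
          refine Finset.sum_congr rfl fun ay _ => ?_
          rw [sub_eq_zero]
          split <;> simp
      _ = ∑ ay : F × F, ∑ x : F, ψ (x * (ay.2 ^ p - ay.2 - f.eval ay.1)) := by
          refine Finset.sum_congr rfl fun ay _ => ?_
          rw [e1]
      _ = ∑ x : F, ∑ ay : F × F, ψ (x * (ay.2 ^ p - ay.2 - f.eval ay.1)) := Finset.sum_comm
      _ = ∑ x : F, (∑ y : F, ψ (x * (y ^ p - y))) * (∑ α : F, ψ (-x * f.eval α)) := by
          refine Finset.sum_congr rfl fun x _ => ?_
          have l1 : ∑ ay : F × F, ψ (x * (ay.2 ^ p - ay.2 - f.eval ay.1))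
              = ∑ α : F, ∑ y : F, ψ (x * (y ^ p - y)) * ψ (-x * f.eval α) := by
            rw [Fintype.sum_prod_type]
            refine Finset.sum_congr rfl fun α _ => Finset.sum_congr rfl fun y _ => ?_
            rw [← AddChar.map_add_eq_mul]
            congr 1
            ring
          rw [l1, Finset.sum_mul_sum]
          exact Finset.sum_comm
  have step2 : ∀ x : F, (∑ y : F, ψ (x * (y ^ p - y))) = if x ^ p = x then ((p:ℂ)^m) else 0 := by
    intro x
    set c : F := x ^ (p ^ (m - 1)) with hc
    have hcp : c ^ p = x := by
      rw [hc, ← pow_mul, ← pow_succ]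
      have h1 : m - 1 + 1 = m := by omega
      rw [h1, ← hcard]
      exact FiniteField.pow_card x
    have hsum : (∑ y : F, ψ (x * (y ^ p - y))) = ∑ y : F, ψ (y * (c - x)) := by
      refine Finset.sum_congr rfl fun y _ => ?_
      have hsplit : x * (y ^ p - y) = ((c * y) ^ p - c * y) + y * (c - x) := by
        rw [mul_pow, hcp]; ring
      rw [hsplit, AddChar.map_add_eq_mul, hψL, one_mul]
    rw [hsum, AddChar.sum_mulShift _ hψprim, hcard]
    have hiff : c - x = 0 ↔ x ^ p = x := by
      constructor
      · intro h
        have hcx : c = x := sub_eq_zero.mp h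
        calc x ^ p = c ^ p := by rw [hcx]
          _ = x := hcp
      · intro h
        rw [hc, aux_pow_pow_eq h, sub_self]
    rw [if_congr hiff rfl rfl]
    push_cast
    rfl
  -- the set of x with x^p = x is the prime field
  have himg : (Finset.univ.filter (fun x : F => x ^ p = x))
      = Finset.univ.image (algebraMap (ZMod p) F) := by
    refine (Finset.eq_of_subset_of_card_le ?_ ?_).symm
    · intro x hx
      simp only [Finset.mem_image, Finset.mem_univ, true_and] at hx
      obtain ⟨j, rfl⟩ := hx
      simp only [Finset.mem_filter, Finset.mem_univ, true_and]
      rw [← map_pow, ZMod.pow_card]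
    · have hcimg : (Finset.univ.image (algebraMap (ZMod p) F)).card = p := by
        rw [Finset.card_image_of_injective _ hφinj, Finset.card_univ, ZMod.card]
      rw [hcimg]
      have hdeg : ((Polynomial.X : Polynomial F) ^ p - Polynomial.X).natDegree = p := by
        have hd : ((Polynomial.X : Polynomial F) ^ p - Polynomial.X).degree = (p : WithBot ℕ) := by
          rw [Polynomial.degree_sub_eq_left_of_degree_lt]
          · exact Polynomial.degree_X_pow p
          · rw [Polynomial.degree_X_pow, Polynomial.degree_X]
            exact_mod_cast hp.one_lt
        exact Polynomial.natDegree_eq_of_degree_eq_some hd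
      have hP0 : ((Polynomial.X : Polynomial F) ^ p - Polynomial.X) ≠ 0 := by
        intro h
        rw [h, Polynomial.natDegree_zero] at hdeg
        exact hp.ne_zero hdeg.symm
      have hsub : (Finset.univ.filter (fun x : F => x ^ p = x))
          ⊆ ((Polynomial.X : Polynomial F) ^ p - Polynomial.X).roots.toFinset := by
        intro x hx
        simp only [Finset.mem_filter, Finset.mem_univ, true_and] at hx
        rw [Multiset.mem_toFinset, Polynomial.mem_roots hP0]
        simp [Polynomial.IsRoot, hx]
      calc (Finset.univ.filter (fun x : F => x ^ p = x)).card
          ≤ ((Polynomial.X : Polynomial F) ^ p - Polynomial.X).roots.toFinset.card :=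
            Finset.card_le_card hsub
        _ ≤ Multiset.card ((Polynomial.X : Polynomial F) ^ p - Polynomial.X).roots :=
            Multiset.toFinset_card_le _
        _ ≤ ((Polynomial.X : Polynomial F) ^ p - Polynomial.X).natDegree :=
            Polynomial.card_roots' _
        _ = p := hdeg
  have step4 : (N : ℂ) = ∑ j : ZMod p, ∑ α : F, ψ (-(algebraMap (ZMod p) F j) * f.eval α) := by
    apply mul_left_cancel₀ hq0
    rw [step1]
    calc ∑ x : F, (∑ y : F, ψ (x * (y ^ p - y))) * (∑ α : F, ψ (-x * f.eval α))
        = ∑ x : F, (if x ^ p = x then ((p:ℂ)^m) else 0) * (∑ α : F, ψ (-x * f.eval α)) :=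
          Finset.sum_congr rfl fun x _ => by rw [step2]
      _ = ∑ x ∈ Finset.univ.filter (fun x : F => x ^ p = x),
            ((p:ℂ)^m) * (∑ α : F, ψ (-x * f.eval α)) := by
          rw [Finset.sum_filter]
          refine Finset.sum_congr rfl fun x _ => ?_
          split <;> simp
      _ = ∑ j : ZMod p, ((p:ℂ)^m) * (∑ α : F, ψ (-(algebraMap (ZMod p) F j) * f.eval α)) := by
          rw [himg, Finset.sum_image (fun x _ y _ h => hφinj h)]
      _ = ((p:ℂ)^m) * ∑ j : ZMod p, ∑ α : F, ψ (-(algebraMap (ZMod p) F j) * f.eval α) := by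
          rw [Finset.mul_sum]
  have hS0 : (∑ α : F, ψ (-(algebraMap (ZMod p) F (0 : ZMod p)) * f.eval α)) = ((p:ℂ)^m) := by
    simp only [map_zero, neg_zero, zero_mul, AddChar.map_zero_eq_one]
    rw [Finset.sum_const, Finset.card_univ, hcard, nsmul_eq_mul, mul_one]
    push_cast
    rfl
  have step5 : (N : ℂ) = ((p:ℂ)^m) + ∑ j ∈ Finset.univ.erase (0 : ZMod p),
      ∑ α : F, ψ (-(algebraMap (ZMod p) F j) * f.eval α) := by
    rw [step4, ← Finset.add_sum_erase _ _ (Finset.mem_univ (0 : ZMod p)), hS0]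
  -- completing the square
  have hf0 : f ≠ 0 := fun h => by simp [h] at hf
  set a : F := f.coeff 2 with ha_def
  have ha : a ≠ 0 := by
    have h1 := Polynomial.leadingCoeff_ne_zero.mpr hf0
    rw [Polynomial.leadingCoeff, hf] at h1
    exact h1
  set b1 : F := f.coeff 1 with hb1_def
  set c0 : F := f.coeff 0 with hc0_def
  have htwo : (2 : F) ≠ 0 := Ring.two_ne_zero hF2
  set d0 : F := b1 / (2 * a) with hd0_def
  set e0 : F := c0 - a * d0 ^ 2 with he0_def
  have heval : ∀ x : F, f.eval x = a * (x + d0) ^ 2 + e0 := by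
    intro x
    have h3 : f.eval x = c0 + b1 * x + a * x ^ 2 := by
      conv_lhs => rw [Polynomial.eval_eq_sum_range, hf]
      rw [Finset.sum_range_succ, Finset.sum_range_succ, Finset.sum_range_one]
      rw [← ha_def, ← hb1_def, ← hc0_def]
      ring
    rw [h3, he0_def, hd0_def]
    field_simp
    ring
  -- quadratic Gauss sums
  have hquad : ∀ w : F, w ≠ 0 → (∑ β : F, ψ (w * β ^ 2)) = χ w * G := by
    intro w hw
    have hcount : ∀ t : F, ((Finset.univ.filter (fun β : F => β ^ 2 = t)).card : ℂ)
        = χ t + 1 := by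
      intro t
      have h1 := quadraticChar_card_sqrts hF2 t
      rw [hχ_apply]
      rw [show Finset.univ.filter (fun β : F => β ^ 2 = t) = {β : F | β ^ 2 = t}.toFinset by
        ext β; simp]
      exact_mod_cast congrArg (fun z : ℤ => (z : ℂ)) h1
    have hzero : (∑ t : F, ψ (w * t)) = 0 := by
      have := e1 w
      calc (∑ t : F, ψ (w * t)) = ∑ t : F, ψ (t * w) := by
            refine Finset.sum_congr rfl fun t _ => by rw [mul_comm]
        _ = 0 := by rw [e1, if_neg hw]
    calc ∑ β : F, ψ (w * β ^ 2)
        = ∑ t : F, ∑ β ∈ Finset.univ.filter (fun β : F => β ^ 2 = t), ψ (w * β ^ 2) :=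
          (Finset.sum_fiberwise_of_maps_to (fun β _ => Finset.mem_univ _) _).symm
      _ = ∑ t : F, (χ t + 1) * ψ (w * t) := by
          refine Finset.sum_congr rfl fun t _ => ?_
          rw [← hcount]
          rw [Finset.sum_congr rfl (fun β hβ => by rw [(Finset.mem_filter.mp hβ).2] :
            ∀ β ∈ Finset.univ.filter (fun β : F => β ^ 2 = t), ψ (w * β ^ 2) = ψ (w * t))]
          rw [Finset.sum_const, nsmul_eq_mul]
      _ = (∑ t : F, χ t * ψ (w * t)) + ∑ t : F, ψ (w * t) := by
          rw [← Finset.sum_add_distrib]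
          exact Finset.sum_congr rfl fun t _ => by ring
      _ = gaussSum χ (ψ.mulShift w) := by
          rw [hzero, add_zero]
          rfl
      _ = χ w * G := by
          have hu := gaussSum_mulShift χ ψ (Units.mk0 w hw)
          simp only [Units.val_mk0] at hu
          have hsq1 : χ w * χ w = 1 := by
            rcases hχquad w with h | h | h
            · exfalso
              have h0 : quadraticChar F w = 0 := by exact_mod_cast hχ_apply w ▸ h
              exact hw (quadraticChar_eq_zero_iff.mp h0)
            · rw [h]; norm_num
            · rw [h]; norm_num
          calc gaussSum χ (ψ.mulShift w) = (χ w * χ w) * gaussSum χ (ψ.mulShift w) := by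
                rw [hsq1, one_mul]
            _ = χ w * (χ w * gaussSum χ (ψ.mulShift w)) := by ring
            _ = χ w * G := by rw [hu]
  have hSval : ∀ u : F, u ≠ 0 →
      (∑ α : F, ψ (u * f.eval α)) = χ (u * a) * G * ψ (u * e0) := by
    intro u hu
    calc ∑ α : F, ψ (u * f.eval α)
        = ∑ β : F, ψ (u * (a * β ^ 2 + e0)) := by
          refine Fintype.sum_equiv (Equiv.addRight d0) _ _ fun α => ?_
          rw [heval]
          simp only [Equiv.coe_addRight]
      _ = ∑ β : F, ψ ((u * a) * β ^ 2) * ψ (u * e0) := by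
          refine Finset.sum_congr rfl fun β _ => ?_
          rw [← AddChar.map_add_eq_mul]
          congr 1
          ring
      _ = (∑ β : F, ψ ((u * a) * β ^ 2)) * ψ (u * e0) := by rw [Finset.sum_mul]
      _ = χ (u * a) * G * ψ (u * e0) := by rw [hquad _ (mul_ne_zero hu ha)]
  have hNfinal : (N : ℂ) = ((p:ℂ)^m) + ∑ j ∈ Finset.univ.erase (0 : ZMod p),
      χ (-(algebraMap (ZMod p) F j) * a) * G * ψ (-(algebraMap (ZMod p) F j) * e0) := by
    rw [step5]
    congr 1
    refine Finset.sum_congr rfl fun j hj => ?_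
    have hj0 : j ≠ 0 := Finset.ne_of_mem_erase hj
    have hφj : algebraMap (ZMod p) F j ≠ 0 := fun h => hj0 (hφinj (by rw [h, map_zero]))
    exact hSval _ (neg_ne_zero.mpr hφj)
  set T : ℂ := ∑ j ∈ Finset.univ.erase (0 : ZMod p),
      χ (-(algebraMap (ZMod p) F j) * a) * G * ψ (-(algebraMap (ZMod p) F j) * e0) with hT_def
  have hNT : (N : ℝ) - (p:ℝ)^m ≤ ‖T‖ := by
    have h0 : (((N : ℝ) - (p:ℝ)^m : ℝ) : ℂ) = T := by
      push_cast
      rw [hNfinal]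
      ring
    have h2 : |(N : ℝ) - (p:ℝ)^m| = ‖T‖ := by
      rw [← h0, Complex.norm_real, Real.norm_eq_abs]
    rw [← h2]
    exact le_abs_self _
  have hGnorm' : ‖G‖ = Real.sqrt ((p:ℝ)^m) := hGnorm
  by_cases hmo : Odd m
  · -- odd case
    rw [if_pos hmo]
    set s0 : ZMod p := Algebra.trace (ZMod p) F (-e0) with hs_def
    set χp : MulChar (ZMod p) ℂ := (quadraticChar (ZMod p)).ringHomComp (Int.castRingHom ℂ)
      with hχp_def
    have hχp_apply : ∀ j : ZMod p, χp j = ((quadraticChar (ZMod p) j : ℤ) : ℂ) := fun j => rfl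
    set ρ : AddChar (ZMod p) ℂ := η.mulShift s0 with hρ_def
    have hterm : ∀ j : ZMod p,
        χ (-(algebraMap (ZMod p) F j) * a) * G * ψ (-(algebraMap (ZMod p) F j) * e0)
        = (χp j * ρ j) * (χ (-a) * G) := by
      intro j
      have h1 : χ (-(algebraMap (ZMod p) F j) * a) = χ (algebraMap (ZMod p) F j) * χ (-a) := by
        rw [← map_mul]
        congr 1
        ring
      have h2 : χ (algebraMap (ZMod p) F j) = χp j := by
        rw [hχ_apply, aux_char_transfer hodd hmo hcard j, hχp_apply]
      have h3 : ψ (-(algebraMap (ZMod p) F j) * e0) = ρ j := by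
        rw [hψ_apply]
        have h4 : -(algebraMap (ZMod p) F j) * e0 = j • (-e0) := by
          rw [Algebra.smul_def]
          ring
        rw [h4, LinearMap.map_smul, smul_eq_mul]
        show η (j * s0) = ρ j
        rw [mul_comm]
        rfl
      rw [h1, h2, h3]
      ring
    have hTfact : T = gaussSum χp ρ * (χ (-a) * G) := by
      rw [hT_def, Finset.sum_congr rfl fun j _ => hterm j, ← Finset.sum_mul]
      congr 1
      show (∑ j ∈ Finset.univ.erase (0 : ZMod p), χp j * ρ j) = ∑ j : ZMod p, χp j * ρ j
      rw [← Finset.add_sum_erase _ _ (Finset.mem_univ (0 : ZMod p))]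
      have h0 : χp (0 : ZMod p) = 0 := by
        rw [hχp_apply, quadraticChar_zero]
        simp
      rw [h0, zero_mul, zero_add]
    have hZchar2 : ringChar (ZMod p) ≠ 2 := by rw [ZMod.ringChar_zmod_n]; exact hodd
    have hTnorm : ‖gaussSum χp ρ‖ ≤ Real.sqrt p := by
      by_cases hs0 : s0 = 0
      · have hz : gaussSum χp ρ = 0 := by
          show (∑ x : ZMod p, χp x * ρ x) = 0
          have hρ1 : ∀ j : ZMod p, ρ j = 1 := fun j => by
            rw [hρ_def, hs0]
            show η (0 * j) = 1
            rw [zero_mul, AddChar.map_zero_eq_one]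
          calc ∑ x : ZMod p, χp x * ρ x = ∑ x : ZMod p, χp x := by
                refine Finset.sum_congr rfl fun x _ => by rw [hρ1, mul_one]
            _ = (((∑ x : ZMod p, quadraticChar (ZMod p) x) : ℤ) : ℂ) := by
                push_cast
                rfl
            _ = 0 := by rw [quadraticChar_sum_zero hZchar2]; simp
        rw [hz]
        simp [Real.sqrt_nonneg]
      · have hρne : ρ ≠ 1 := hηprim hs0
        have hρprim : ρ.IsPrimitive := AddChar.IsPrimitive.of_ne_one hρne
        have hχpne : χp ≠ 1 := (MulChar.ringHomComp_ne_one_iff (RingHom.injective_int _)).mpr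
          (quadraticChar_ne_one hZchar2)
        have hχpquad : χp.IsQuadratic := (quadraticChar_isQuadratic _).comp _
        have hg2 : (gaussSum χp ρ) ^ 2 = χp (-1) * Fintype.card (ZMod p) :=
          gaussSum_sq hχpne hχpquad hρprim
        have hn1 : ‖χp (-1)‖ = 1 := by
          rcases hχpquad (-1) with h | h | h
          · exfalso
            have h0 : quadraticChar (ZMod p) (-1) = 0 := by exact_mod_cast hχp_apply (-1) ▸ h
            rw [quadraticChar_eq_zero_iff] at h0
            exact (neg_ne_zero.mpr one_ne_zero) h0
          · simp [h]
          · simp [h]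
        have heq2 : ‖gaussSum χp ρ‖ ^ 2 = (p:ℝ) := by
          rw [← norm_pow, hg2, norm_mul, hn1, one_mul, ZMod.card, Complex.norm_natCast]
        refine le_of_eq ?_
        rw [← Real.sqrt_sq (norm_nonneg (gaussSum χp ρ)), heq2]
    have hTle : ‖T‖ ≤ Real.sqrt p * Real.sqrt ((p:ℝ)^m) := by
      rw [hTfact, norm_mul, norm_mul, hGnorm']
      have h1 : ‖χ (-a)‖ ≤ 1 := hχnorm _
      have h2 : ‖χ (-a)‖ * Real.sqrt ((p:ℝ)^m) ≤ 1 * Real.sqrt ((p:ℝ)^m) :=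
        mul_le_mul_of_nonneg_right h1 (Real.sqrt_nonneg _)
      rw [one_mul] at h2
      exact mul_le_mul hTnorm h2 (by positivity) (Real.sqrt_nonneg _)
    have hsqrt : Real.sqrt (p:ℝ) * Real.sqrt ((p:ℝ)^m) = (p:ℝ)^((m+1)/2) := by
      rw [← Real.sqrt_mul (by positivity)]
      have h2 : ((p:ℝ)^((m+1)/2))^2 = (p:ℝ) * (p:ℝ)^m := by
        rw [← pow_mul, ← pow_succ']
        congr 1
        have := Nat.odd_iff.mp hmo
        omega
      rw [← h2, Real.sqrt_sq (by positivity)]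
    rw [hsqrt] at hTle
    have hfin : (N:ℝ) ≤ ((p ^ m + p ^ ((m+1)/2) : ℕ) : ℝ) := by
      push_cast
      linarith [hNT, hTle]
    exact_mod_cast hfin
  · -- even case
    rw [if_neg hmo]
    have hTb : ‖T‖ ≤ ((p : ℝ) - 1) * Real.sqrt ((p:ℝ)^m) := by
      calc ‖T‖ ≤ ∑ j ∈ Finset.univ.erase (0:ZMod p),
            ‖χ (-(algebraMap (ZMod p) F j) * a) * G * ψ (-(algebraMap (ZMod p) F j) * e0)‖ :=
            norm_sum_le _ _
        _ ≤ ∑ _j ∈ Finset.univ.erase (0:ZMod p), Real.sqrt ((p:ℝ)^m) := by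
            refine Finset.sum_le_sum fun j _ => ?_
            rw [norm_mul, norm_mul, hψnorm, mul_one, hGnorm']
            have h1 := hχnorm (-(algebraMap (ZMod p) F j) * a)
            have h2 : ‖χ (-(algebraMap (ZMod p) F j) * a)‖ * Real.sqrt ((p:ℝ)^m)
                ≤ 1 * Real.sqrt ((p:ℝ)^m) :=
              mul_le_mul_of_nonneg_right h1 (Real.sqrt_nonneg _)
            rw [one_mul] at h2
            exact h2
        _ = ((p:ℝ) - 1) * Real.sqrt ((p:ℝ)^m) := by
            rw [Finset.sum_const, Finset.card_erase_of_mem (Finset.mem_univ _),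
              Finset.card_univ, ZMod.card, nsmul_eq_mul]
            rw [Nat.cast_sub hp.one_le]
            push_cast
            ring
    have hsqrt : Real.sqrt ((p:ℝ)^m) = (p:ℝ)^(m/2) := by
      have hme : m % 2 = 0 := Nat.even_iff.mp (Nat.not_odd_iff_even.mp hmo)
      have h2 : ((p:ℝ)^(m/2))^2 = (p:ℝ)^m := by
        rw [← pow_mul]
        congr 1
        omega
      rw [← h2, Real.sqrt_sq (by positivity)]
    rw [hsqrt] at hTb
    have hfin : (N:ℝ) ≤ ((p ^ m + (p - 1) * p ^ (m / 2) : ℕ) : ℝ) := by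
      push_cast [Nat.cast_sub hp.one_le]
      linarith [hNT, hTb]
    exact_mod_cast hfin
end

section
/- Let p be an odd prime, q = p^m with m odd, and f(x) = a x^2 + b x + c ∈ F_q[x] with a ≠ 0. Then |{α ∈ F_q : Tr(f(α)) = 0}| equals p^{m-1} + ε p^{(m-1)/2} for some ε ∈ {-1, 0, 1}, where Tr is the trace from F_q to F_p. -/
open Finset AddChar MulChar

lemma aux_odd_sum {p m : ℕ} (hp : Odd p) (hm : Odd m) :
    Odd (∑ i ∈ Finset.range m, p ^ i) := by
  rw [Nat.odd_iff, Finset.sum_nat_mod]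
  have : ∀ i ∈ Finset.range m, p ^ i % 2 = 1 := fun i _ => Nat.odd_iff.mp (hp.pow)
  rw [Finset.sum_congr rfl this, Finset.sum_const, Finset.card_range, smul_eq_mul, mul_one]
  exact Nat.odd_iff.mp hm

lemma aux_geom {p m : ℕ} (hp : 1 ≤ p) :
    (p - 1) * (∑ i ∈ Finset.range m, p ^ i) = p ^ m - 1 := by
  have h1 : (1:ℕ) ≤ p ^ m := Nat.one_le_pow _ _ hp
  have := geom_sum_mul (p : ℤ) m
  zify [hp, h1]
  linarith [this]

lemma aux_quadChar_algebraMap {p m : ℕ} [hfact : Fact p.Prime] (hodd : p ≠ 2) (hm : Odd m)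
    {F : Type*} [Field F] [Fintype F] [DecidableEq F] [Algebra (ZMod p) F]
    (hcard : Fintype.card F = p ^ m) (t : ZMod p) :
    quadraticChar F (algebraMap (ZMod p) F t) = quadraticChar (ZMod p) t := by
  have hp := hfact.out
  have hinj := (algebraMap (ZMod p) F).injective
  rcases eq_or_ne t 0 with rfl | ht
  · simp
  have hu : algebraMap (ZMod p) F t ≠ 0 := fun h => ht (hinj (by simpa using h))
  have hcharF : CharP F p := charP_of_injective_algebraMap hinj p
  have hF2 : ringChar F ≠ 2 := by
    rw [ringChar.eq F p]; exact hodd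
  have hZ2 : ringChar (ZMod p) ≠ 2 := by
    rw [ZMod.ringChar_zmod_n]; exact hodd
  have hpodd : Odd p := hp.odd_of_ne_two hodd
  -- key: IsSquare (algebraMap t) ↔ IsSquare t
  have hk : Odd (∑ i ∈ Finset.range m, p ^ i) := aux_odd_sum hpodd hm
  have hsq : t ^ ((p - 1) / 2) = 1 ∨ t ^ ((p - 1) / 2) = -1 := by
    have h2 : t ^ ((p - 1) / 2) * t ^ ((p - 1) / 2) = 1 := by
      rw [← pow_add, ← two_mul, Nat.two_mul_div_two_of_even (Nat.Odd.sub_odd hpodd odd_one)]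
      exact ZMod.pow_card_sub_one_eq_one ht
    exact mul_self_eq_one_iff.mp h2
  have hpow : t ^ ((p ^ m - 1) / 2) = t ^ ((p - 1) / 2) := by
    have h2 : (2:ℕ) ∣ p - 1 := (Nat.Odd.sub_odd hpodd odd_one).two_dvd
    have hdiv : (p ^ m - 1) / 2 = (p - 1) / 2 * (∑ i ∈ Finset.range m, p ^ i) := by
      obtain ⟨j, hj⟩ := h2
      rw [← aux_geom hp.one_lt.le, hj, mul_assoc, Nat.mul_div_cancel_left _ two_pos,
        Nat.mul_div_cancel_left _ two_pos]
    rw [hdiv, pow_mul]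
    rcases hsq with h | h <;> rw [h]
    · exact one_pow _
    · exact Odd.neg_one_pow hk
  have hcard2 : Fintype.card F / 2 = (p ^ m - 1) / 2 := by
    obtain ⟨k, hk'⟩ := hpodd.pow (n := m)
    rw [hcard]
    omega
  have hp2 : p / 2 = (p - 1) / 2 := by
    obtain ⟨k, hk'⟩ := hpodd
    omega
  have hiff : IsSquare (algebraMap (ZMod p) F t) ↔ IsSquare t := by
    rw [FiniteField.isSquare_iff hF2 hu, FiniteField.isSquare_iff hZ2 ht, ZMod.card p,
      hcard2, hp2, ← map_pow, hpow]
    exact ⟨fun h => hinj (by simpa using h), fun h => by rw [h, map_one]⟩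
  have h1iff : quadraticChar F (algebraMap (ZMod p) F t) = 1 ↔ quadraticChar (ZMod p) t = 1 := by
    rw [quadraticChar_one_iff_isSquare hu, quadraticChar_one_iff_isSquare ht, hiff]
  rcases quadraticChar_dichotomy hu with h | h
  · rw [h]; exact (h1iff.mp h).symm
  · rw [h]
    rcases quadraticChar_dichotomy ht with h2 | h2
    · rw [h1iff.mpr h2] at h; exact absurd h (by decide)
    · exact h2.symm

lemma aux_fiber_card {p : ℕ} [hfact : Fact p.Prime] {F : Type*} [Field F] [Fintype F]
    [DecidableEq F] [Algebra (ZMod p) F] (L : F →ₗ[ZMod p] ZMod p) (γ₀ : F) (hγ₀ : L γ₀ ≠ 0)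
    (e : ZMod p) :
    p * ({γ : F | L γ = e} : Set F).toFinset.card = Fintype.card F := by
  classical
  have hsurj : ∀ t : ZMod p, ∃ γ, L γ = t := fun t =>
    ⟨(t / L γ₀) • γ₀, by rw [map_smul, smul_eq_mul, div_mul_cancel₀ _ hγ₀]⟩
  have key : ∀ t : ZMod p, (Finset.univ.filter (fun γ : F => L γ = t)).card
      = (Finset.univ.filter (fun γ : F => L γ = e)).card := by
    intro t
    obtain ⟨γe, he⟩ := hsurj e
    obtain ⟨γt, ht⟩ := hsurj t
    apply Finset.card_bij' (fun x _ => x + (γe - γt)) (fun y _ => y + (γt - γe))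
    · intro x hx
      simp only [Finset.mem_filter, Finset.mem_univ, true_and] at hx ⊢
      rw [map_add, map_sub, hx, he, ht]; ring
    · intro y hy
      simp only [Finset.mem_filter, Finset.mem_univ, true_and] at hy ⊢
      rw [map_add, map_sub, hy, he, ht]; ring
    · intro x _; ring
    · intro y _; ring
  have := Finset.card_eq_sum_card_fiberwise (f := fun γ : F => L γ)
    (s := Finset.univ) (t := Finset.univ) (fun x _ => Finset.mem_univ _)
  rw [Finset.card_univ] at this
  rw [Set.toFinset_setOf]
  rw [this, Finset.sum_congr rfl (fun t _ => key t), Finset.sum_const, Finset.card_univ,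
    ZMod.card, smul_eq_mul]

lemma aux_S {p m : ℕ} [hfact : Fact p.Prime] (hodd : p ≠ 2) (hm : Odd m)
    {F : Type*} [Field F] [Fintype F] [DecidableEq F] [Algebra (ZMod p) F]
    (hcard : Fintype.card F = p ^ m) {a : F} (ha : a ≠ 0) (e : ZMod p)
    (hchar : ∀ t : ZMod p, quadraticChar F (algebraMap (ZMod p) F t) = quadraticChar (ZMod p) t) :
    (∑ γ ∈ Finset.univ.filter (fun γ : F => Algebra.trace (ZMod p) F (a * γ) = e),
        quadraticChar F γ) = 0 ∨
    ((∑ γ ∈ Finset.univ.filter (fun γ : F => Algebra.trace (ZMod p) F (a * γ) = e),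
        quadraticChar F γ) ^ 2 = p ^ (m - 1) ∧ e ≠ 0) := by
  have hp := hfact.out
  haveI : NeZero p := ⟨hp.ne_zero⟩
  have hinj := (algebraMap (ZMod p) F).injective
  have hcharF : CharP F p := charP_of_injective_algebraMap hinj p
  have hF2 : ringChar F ≠ 2 := by rw [ringChar.eq F p]; exact hodd
  have hZ2 : ringChar (ZMod p) ≠ 2 := by rw [ZMod.ringChar_zmod_n]; exact hodd
  set Tr := Algebra.trace (ZMod p) F with hTr
  set pp : ℕ+ := ⟨p, hp.pos⟩ with hpp
  set Ψ₀ := AddChar.primitiveZModChar pp ℚ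
    (by exact_mod_cast hp.ne_zero) with hΨ₀
  set R := CyclotomicField Ψ₀.n ℚ with hR
  haveI : CharZero R := charZero_of_injective_algebraMap (algebraMap ℚ R).injective
  set ψ : AddChar (ZMod p) R := Ψ₀.char with hψdef
  have hψ : ψ.IsPrimitive := Ψ₀.prim
  set Ψ : AddChar F R := ψ.compAddMonoidHom Tr.toAddMonoidHom with hΨdef
  have hΨapp : ∀ x : F, Ψ x = ψ (Tr x) := fun x => rfl
  -- trace is nonzero somewhere
  obtain ⟨x₀, hx₀⟩ : ∃ x : F, Tr x ≠ 0 := by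
    by_contra h
    push_neg at h
    exact Algebra.trace_ne_zero (ZMod p) F (LinearMap.ext h)
  have hΨne : Ψ ≠ 1 := by
    rw [AddChar.ne_one_iff]
    exact ⟨x₀, fun h => hx₀ ((hψ.zmod_char_eq_one_iff pp _).mp h)⟩
  have hΨprim : Ψ.IsPrimitive := AddChar.IsPrimitive.of_ne_one hΨne
  set χ : MulChar F R := (quadraticChar F).ringHomComp (Int.castRingHom R) with hχdef
  set η : MulChar (ZMod p) R := (quadraticChar (ZMod p)).ringHomComp (Int.castRingHom R) with hηdef
  have hχ : χ ≠ 1 := (MulChar.ringHomComp_ne_one_iff Int.cast_injective).mpr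
    (quadraticChar_ne_one hF2)
  have hη : η ≠ 1 := (MulChar.ringHomComp_ne_one_iff Int.cast_injective).mpr
    (quadraticChar_ne_one hZ2)
  set g := gaussSum χ Ψ with hg
  set g₀ := gaussSum η ψ with hg₀
  set H := Finset.univ.filter (fun γ : F => Tr (a * γ) = e) with hH
  set Sz : ℤ := ∑ γ ∈ H, quadraticChar F γ with hSz
  have hcastS : ((Sz : ℤ) : R) = ∑ γ ∈ H, χ γ := by
    rw [hSz]
    push_cast
    exact map_sum (Int.castRingHom R) (fun γ => quadraticChar F γ) H
  have trs : ∀ (t : ZMod p) (x : F), Tr (algebraMap (ZMod p) F t * x) = t * Tr x := fun t x => by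
    rw [← Algebra.smul_def, map_smul, smul_eq_mul]
  -- step 1
  have step1 : ∑ γ : F, χ γ * (∑ t : ZMod p, ψ (t * (Tr (a * γ) - e)))
      = (p : R) * ((Sz : ℤ) : R) := by
    have h1 : ∀ γ : F, (∑ t : ZMod p, ψ (t * (Tr (a * γ) - e)))
        = if Tr (a * γ) = e then (p : R) else 0 := by
      intro γ
      rw [AddChar.sum_mulShift _ hψ, ZMod.card]
      simp only [sub_eq_zero]
      split_ifs <;> simp
    simp_rw [h1, mul_ite, mul_zero, ← Finset.sum_filter, ← hH]
    rw [hcastS, Finset.mul_sum]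
    exact Finset.sum_congr rfl fun γ _ => mul_comm _ _
  -- step 2
  have step2 : ∑ γ : F, χ γ * (∑ t : ZMod p, ψ (t * (Tr (a * γ) - e)))
      = ∑ t : ZMod p, ψ (t * (-e)) * gaussSum χ (Ψ.mulShift (algebraMap (ZMod p) F t * a)) := by
    simp_rw [Finset.mul_sum]
    rw [Finset.sum_comm]
    refine Finset.sum_congr rfl fun t _ => ?_
    rw [gaussSum, Finset.mul_sum]
    refine Finset.sum_congr rfl fun γ _ => ?_
    have : t * (Tr (a * γ) - e) = t * Tr (a * γ) + t * (-e) := by ring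
    rw [this, AddChar.map_add_eq_mul, AddChar.mulShift_apply, hΨapp, mul_assoc, trs]
    ring
  -- step 3: evaluate the inner Gauss sums
  have hqs : ∀ v : F, v ≠ 0 → χ v * χ v = 1 := by
    intro v hv
    have := quadraticChar_sq_one (F := F) hv
    have h2 : ((quadraticChar F v : ℤ) : R) * ((quadraticChar F v : ℤ) : R) = 1 := by
      rw [← Int.cast_mul, ← sq, this, Int.cast_one]
    exact h2
  have hqsZ : ∀ v : ZMod p, v ≠ 0 → η v * η v = 1 := by
    intro v hv
    have := quadraticChar_sq_one (F := ZMod p) hv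
    have h2 : ((quadraticChar (ZMod p) v : ℤ) : R) * ((quadraticChar (ZMod p) v : ℤ) : R) = 1 := by
      rw [← Int.cast_mul, ← sq, this, Int.cast_one]
    exact h2
  have step3 : ∀ t : ZMod p, t ≠ 0 →
      gaussSum χ (Ψ.mulShift (algebraMap (ZMod p) F t * a)) = η t * χ a * g := by
    intro t ht
    have hv : algebraMap (ZMod p) F t * a ≠ 0 :=
      mul_ne_zero (fun h => ht (hinj (by simpa using h))) ha
    have := gaussSum_mulShift χ Ψ (Units.mk0 _ hv)
    simp only [Units.val_mk0] at this
    have h2 : gaussSum χ (Ψ.mulShift (algebraMap (ZMod p) F t * a))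
        = χ (algebraMap (ZMod p) F t * a) * g := by
      calc gaussSum χ (Ψ.mulShift (algebraMap (ZMod p) F t * a))
          = 1 * gaussSum χ (Ψ.mulShift (algebraMap (ZMod p) F t * a)) := (one_mul _).symm
        _ = χ (algebraMap (ZMod p) F t * a) *
            (χ (algebraMap (ZMod p) F t * a) * gaussSum χ (Ψ.mulShift (algebraMap (ZMod p) F t * a))) := by
            rw [← mul_assoc, hqs _ hv]
        _ = χ (algebraMap (ZMod p) F t * a) * g := by rw [this]
    rw [h2, map_mul]
    congr 1
    congr 1
    show ((quadraticChar F (algebraMap (ZMod p) F t) : ℤ) : R) = _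
    rw [hchar t]
    rfl
  have step4 : gaussSum χ (Ψ.mulShift (algebraMap (ZMod p) F 0 * a)) = 0 := by
    have : Ψ.mulShift (algebraMap (ZMod p) F 0 * a) = Ψ.mulShift 0 := by
      rw [map_zero, zero_mul]
    rw [this]
    unfold gaussSum
    simp only [AddChar.mulShift_apply, zero_mul, AddChar.map_zero_eq_one, mul_one]
    exact χ.sum_eq_zero_of_ne_one hχ
  -- combine
  have main : (p : R) * ((Sz : ℤ) : R) = χ a * g * gaussSum η (ψ.mulShift (-e)) := by
    rw [← step1, step2]
    have : gaussSum η (ψ.mulShift (-e)) = ∑ t : ZMod p, η t * ψ (-e * t) := by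
      unfold gaussSum
      simp only [AddChar.mulShift_apply]
    rw [this, Finset.mul_sum]
    refine Finset.sum_congr rfl fun t _ => ?_
    rcases eq_or_ne t 0 with rfl | ht
    · rw [step4, mul_zero]
      have : η (0 : ZMod p) = 0 := by
        show ((quadraticChar (ZMod p) (0 : ZMod p) : ℤ) : R) = 0
        rw [quadraticChar_zero]; simp
      rw [this]
      ring
    · rw [step3 t ht, neg_mul, mul_comm e t, ← mul_neg]
      ring
  rcases eq_or_ne e 0 with rfl | he
  · -- e = 0 : the sum vanishes
    left
    have h0 : gaussSum η (ψ.mulShift (-(0 : ZMod p))) = 0 := by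
      have : ψ.mulShift (-(0 : ZMod p)) = ψ.mulShift 0 := by rw [neg_zero]
      rw [this]
      unfold gaussSum
      simp only [AddChar.mulShift_apply, zero_mul, AddChar.map_zero_eq_one, mul_one]
      exact η.sum_eq_zero_of_ne_one hη
    rw [h0, mul_zero] at main
    have hpne : (p : R) ≠ 0 := Nat.cast_ne_zero.mpr hp.ne_zero
    have : ((Sz : ℤ) : R) = 0 := by
      rcases mul_eq_zero.mp main with h | h
      · exact absurd h hpne
      · exact h
    exact_mod_cast this
  · -- e ≠ 0
    right
    refine ⟨?_, he⟩
    have hne : (-e : ZMod p) ≠ 0 := neg_ne_zero.mpr he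
    have hshift := gaussSum_mulShift η ψ (Units.mk0 (-e) hne)
    simp only [Units.val_mk0] at hshift
    have hT2 : gaussSum η (ψ.mulShift (-e)) * gaussSum η (ψ.mulShift (-e)) = g₀ * g₀ := by
      have : η (-e) * gaussSum η (ψ.mulShift (-e)) * (η (-e) * gaussSum η (ψ.mulShift (-e)))
          = g₀ * g₀ := by rw [hshift]
      calc gaussSum η (ψ.mulShift (-e)) * gaussSum η (ψ.mulShift (-e))
          = η (-e) * η (-e) * (gaussSum η (ψ.mulShift (-e)) * gaussSum η (ψ.mulShift (-e))) := by
            rw [hqsZ _ hne, one_mul]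
        _ = g₀ * g₀ := by rw [← this]; ring
    have hm1 : (-1 : ZMod p) ≠ 0 := by
      intro h
      have : (1 : ZMod p) = 0 := by linear_combination -h
      exact one_ne_zero this
    have hg2 : g * g = η (-1) * (p : R) ^ m := by
      have := gaussSum_sq hχ ((quadraticChar_isQuadratic F).comp _) hΨprim
      rw [← sq, this, hcard]
      congr 1
      · show ((quadraticChar F (-1 : F) : ℤ) : R) = ((quadraticChar (ZMod p) (-1) : ℤ) : R)
        have : ((-1 : F)) = algebraMap (ZMod p) F (-1) := by rw [map_neg, map_one]
        rw [this, hchar]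
      · push_cast
        ring
    have hg02 : g₀ * g₀ = η (-1) * (p : R) := by
      have := gaussSum_sq hη ((quadraticChar_isQuadratic (ZMod p)).comp _) hψ
      rw [← sq, this, ZMod.card]
    -- square the main identity
    have hsq2 : (p : R) ^ 2 * ((Sz : ℤ) : R) ^ 2 = (p : R) ^ (m + 1) := by
      have h1 : ((p : R) * ((Sz : ℤ) : R)) * ((p : R) * ((Sz : ℤ) : R))
          = (χ a * χ a) * (g * g) * (gaussSum η (ψ.mulShift (-e)) * gaussSum η (ψ.mulShift (-e))) := by
        rw [main]; ring
      rw [hT2, hg02, hqs a ha, one_mul, hg2] at h1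
      have h2 : η (-1) * η (-1) = 1 := hqsZ _ hm1
      calc (p : R) ^ 2 * ((Sz : ℤ) : R) ^ 2
          = ((p : R) * ((Sz : ℤ) : R)) * ((p : R) * ((Sz : ℤ) : R)) := by ring
        _ = η (-1) * (p : R) ^ m * (η (-1) * (p : R)) := h1
        _ = (η (-1) * η (-1)) * ((p : R) ^ m * (p : R)) := by ring
        _ = (p : R) ^ (m + 1) := by rw [h2, one_mul, pow_succ]
    have hm0 : m ≠ 0 := by rintro rfl; exact (Nat.not_odd_iff_even.mpr Even.zero) hm
    have hmm : m + 1 = (m - 1) + 2 := by omega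
    have hpne : (p : R) ≠ 0 := Nat.cast_ne_zero.mpr hp.ne_zero
    have hfinal : ((Sz : ℤ) : R) ^ 2 = (p : R) ^ (m - 1) := by
      have : (p : R) ^ 2 * ((Sz : ℤ) : R) ^ 2 = (p : R) ^ 2 * (p : R) ^ (m - 1) := by
        rw [hsq2, hmm, pow_add]; ring
      exact mul_left_cancel₀ (pow_ne_zero 2 hpne) this
    have : ((Sz ^ 2 : ℤ) : R) = (((p : ℤ) ^ (m - 1) : ℤ) : R) := by push_cast; exact_mod_cast hfinal
    exact_mod_cast this

/-- for `p` odd, `q = p^m` with `m` odd and `f(x) = ax² + bx + c`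
with `a ≠ 0`, the number of `α ∈ F_q` with `Tr(f(α)) = 0` is
`p^{m-1} + ε p^{(m-1)/2}` for some `ε ∈ {-1, 0, 1}`. -/
theorem stmt_12 (p m : ℕ) (hp : p.Prime) (hodd : p ≠ 2) (hm : Odd m)
    (F : Type*) [Field F] [Fintype F] [Algebra (ZMod p) F]
    (hcard : Fintype.card F = p ^ m) (a b c : F) (ha : a ≠ 0) :
    ∃ ε : ℤ, ε ∈ ({-1, 0, 1} : Set ℤ) ∧
      (Nat.card {α : F // Algebra.trace (ZMod p) F (a * α ^ 2 + b * α + c) = 0} : ℤ)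
        = p ^ (m - 1) + ε * p ^ ((m - 1) / 2) := by
  classical
  haveI hfact : Fact p.Prime := ⟨hp⟩
  have hinj := (algebraMap (ZMod p) F).injective
  have hcharF : CharP F p := charP_of_injective_algebraMap hinj p
  have hF2 : ringChar F ≠ 2 := by rw [ringChar.eq F p]; exact hodd
  have h2 : (2 : F) ≠ 0 := Ring.two_ne_zero hF2
  set Tr := Algebra.trace (ZMod p) F with hTrdef
  set d : F := b / (2 * a) with hd
  set e : ZMod p := Tr (b ^ 2 / (4 * a) - c) with he
  set H := Finset.univ.filter (fun γ : F => Tr (a * γ) = e) with hH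
  set Sz : ℤ := ∑ γ ∈ H, quadraticChar F γ with hSz
  -- step 1 : complete the square
  have hshift : ∀ α : F, (Tr (a * α ^ 2 + b * α + c) = 0) ↔ (Tr (a * (α + d) ^ 2) = e) := by
    intro α
    have h4 : (4 : F) ≠ 0 := by
      have : (4 : F) = 2 * 2 := by norm_num
      rw [this]; exact mul_ne_zero h2 h2
    have hids : a * (α + d) ^ 2 = (a * α ^ 2 + b * α + c) + (b ^ 2 / (4 * a) - c) := by
      rw [hd]
      field_simp
      ring
    have hkey : Tr (a * (α + d) ^ 2) = Tr (a * α ^ 2 + b * α + c) + e := by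
      rw [hids, map_add]
    constructor
    · intro h; rw [hkey, h, zero_add]
    · intro h; rw [hkey] at h; exact add_eq_right.mp h
  have hN : (Nat.card {α : F // Tr (a * α ^ 2 + b * α + c) = 0} : ℤ)
      = ((Finset.univ.filter (fun β : F => Tr (a * β ^ 2) = e)).card : ℤ) := by
    congr 1
    rw [Nat.card_congr ((Equiv.addRight d).subtypeEquiv
        (q := fun β : F => Tr (a * β ^ 2) = e) (fun α => by simpa using hshift α)),
      Nat.card_eq_fintype_card, Fintype.card_subtype]
  -- step 2 : count square roots fiberwise
  have hcount : ((Finset.univ.filter (fun β : F => Tr (a * β ^ 2) = e)).card : ℤ)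
      = (H.card : ℤ) + Sz := by
    rw [Finset.card_eq_sum_card_fiberwise (f := fun β : F => β ^ 2) (t := H)
      (fun β hβ => by
        simp only [Finset.mem_coe, hH, Finset.mem_filter, Finset.mem_univ, true_and] at hβ ⊢
        exact hβ)]
    have hfib : ∀ γ ∈ H, ((Finset.univ.filter (fun β : F => Tr (a * β ^ 2) = e)).filter
        (fun β => β ^ 2 = γ)).card = (quadraticChar F γ + 1 : ℤ) := by
      intro γ hγ
      simp only [hH, Finset.mem_filter, Finset.mem_univ, true_and] at hγ
      have hset : ((Finset.univ.filter (fun β : F => Tr (a * β ^ 2) = e)).filter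
          (fun β => β ^ 2 = γ)) = Finset.univ.filter (fun β : F => β ^ 2 = γ) := by
        ext β
        simp only [Finset.mem_filter, Finset.mem_univ, true_and]
        exact ⟨fun h => h.2, fun h => ⟨by rw [h]; exact hγ, h⟩⟩
      rw [hset, ← quadraticChar_card_sqrts hF2 γ]
      congr 1
      rw [Set.toFinset_setOf]
    rw [Nat.cast_sum, Finset.sum_congr rfl hfib, Finset.sum_add_distrib, ← hSz,
      Finset.sum_const, nsmul_eq_mul, mul_one, add_comm]
  -- step 3 : cardinality of the hyperplane H
  have hHcard : (H.card : ℤ) = (p : ℤ) ^ (m - 1) := by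
    have hm0 : m ≠ 0 := by rintro rfl; exact (Nat.not_odd_iff_even.mpr Even.zero) hm
    obtain ⟨x₀, hx₀⟩ : ∃ x : F, Tr x ≠ 0 := by
      by_contra h
      push_neg at h
      exact Algebra.trace_ne_zero (ZMod p) F (LinearMap.ext h)
    set L : F →ₗ[ZMod p] F := LinearMap.mulLeft (ZMod p) a with hL
    set L2 : F →ₗ[ZMod p] ZMod p := Tr ∘ₗ (LinearMap.mulLeft (ZMod p) a) with hL2
    have hL2app : ∀ γ : F, L2 γ = Tr (a * γ) := fun γ => rfl
    have hγ₀ : L2 (a⁻¹ * x₀) ≠ 0 := by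
      rw [hL2app, ← mul_assoc, mul_inv_cancel₀ ha, one_mul]
      exact hx₀
    have := aux_fiber_card L2 (a⁻¹ * x₀) hγ₀ e
    have hset : ({γ : F | L2 γ = e} : Set F).toFinset = H := by
      rw [Set.toFinset_setOf]
      rfl
    rw [hset, hcard] at this
    have hpow : p ^ m = p * p ^ (m - 1) := by
      conv_lhs => rw [show m = 1 + (m - 1) by omega]
      rw [pow_add, pow_one]
    rw [hpow] at this
    have := Nat.eq_of_mul_eq_mul_left hp.pos this
    exact_mod_cast congrArg (Nat.cast : ℕ → ℤ) this
  -- step 4 : the character sum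
  have hchar := fun t => aux_quadChar_algebraMap (m := m) hodd hm hcard t
  rcases aux_S hodd hm hcard ha e hchar with hS0 | ⟨hS0, _⟩
  · have hS : Sz = 0 := hS0
    exact ⟨0, by simp, by rw [hN, hcount, hHcard, hS]; push_cast; ring⟩
  · have hS : Sz ^ 2 = (p : ℤ) ^ (m - 1) := by exact_mod_cast hS0
    have hmdiv : m - 1 = 2 * ((m - 1) / 2) := by
      obtain ⟨k, hk⟩ := hm; omega
    have hPsq : ((p : ℤ) ^ ((m - 1) / 2)) ^ 2 = (p : ℤ) ^ (m - 1) := by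
      rw [← pow_mul, mul_comm, ← hmdiv]
    have hfact2 : (Sz - (p : ℤ) ^ ((m - 1) / 2)) * (Sz + (p : ℤ) ^ ((m - 1) / 2)) = 0 := by
      have := hS
      rw [← hPsq] at this
      ring_nf
      linear_combination this - hPsq + hPsq
    rcases mul_eq_zero.mp hfact2 with h | h
    · refine ⟨1, by simp, ?_⟩
      rw [hN, hcount, hHcard, sub_eq_zero.mp h, one_mul]
    · refine ⟨-1, by simp, ?_⟩
      have : Sz = -(p : ℤ) ^ ((m - 1) / 2) := by linarith
      rw [hN, hcount, hHcard, this]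
      ring
end

section
/- Let p be an odd prime, q = p^m, and a ∈ F_q^*. Writing Tr(a x^2) in diagonal form a_1 y_1^2 + ... + a_m y_m^2 over F_p (all a_i ≠ 0) with determinant Δ_a = a_1...a_m, exactly half the elements a ∈ F_q^* satisfy η((-1)^{m/2} Δ_a) = 1 and exactly half satisfy η((-1)^{m/2} Δ_a) = -1, when m is even; here η is the quadratic character of F_p. -/
set_option maxHeartbeats 1000000

open Finset

private lemma key_sum' {F : Type*} [Field F] [Fintype F] [DecidableEq F] (hF : ringChar F ≠ 2)
    {R' : Type*} [CommRing R'] [IsDomain R'] {ψ : AddChar F R'} (hψ : ψ.IsPrimitive)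
    {b : F} (hb : b ≠ 0) :
    ∑ x : F, ψ (b * x ^ 2)
      = ((quadraticChar F b : ℤ) : R') *
        gaussSum ((quadraticChar F).ringHomComp (Int.castRingHom R')) ψ := by
  set χ := (quadraticChar F).ringHomComp (Int.castRingHom R') with hχ
  have h1 : ∑ x : F, ψ (b * x ^ 2)
      = ∑ t : F, (((quadraticChar F t : ℤ) : R') * ψ (b * t) + ψ (b * t)) := by
    rw [← Finset.sum_fiberwise' Finset.univ (fun x : F => x ^ 2) (fun t => ψ (b * t))]
    refine Finset.sum_congr rfl fun t _ => ?_
    rw [Finset.sum_const]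
    have hset : ({x : F | x ^ 2 = t} : Set F).toFinset = ({x ∈ univ | x ^ 2 = t} : Finset F) := by
      ext x; simp
    have hcard : ((({x ∈ univ | x ^ 2 = t} : Finset F).card : ℤ)) = quadraticChar F t + 1 := by
      rw [← hset]; exact_mod_cast quadraticChar_card_sqrts hF t
    have : (({x ∈ univ | x ^ 2 = t} : Finset F).card : R') = ((quadraticChar F t : ℤ) : R') + 1 := by
      have := congrArg (fun z : ℤ => (z : R')) hcard
      push_cast at this ⊢
      linear_combination this
    rw [nsmul_eq_mul, this, add_mul, one_mul]
  rw [h1, Finset.sum_add_distrib]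
  have h2 : ∑ t : F, ψ (b * t) = 0 := by
    have := AddChar.sum_mulShift b hψ
    simp only [hb, if_false] at this
    push_cast at this
    rw [← this]
    exact Finset.sum_congr rfl fun t _ => by rw [mul_comm]
  have h3 : ∑ t : F, ((quadraticChar F t : ℤ) : R') * ψ (b * t)
      = gaussSum χ (ψ.mulShift b) := by
    unfold gaussSum
    refine Finset.sum_congr rfl fun t _ => by simp [hχ]
  rw [h2, add_zero, h3]
  have hms := gaussSum_mulShift χ ψ (Units.mk0 b hb)
  have hbb : χ b * χ b = 1 := by
    have : (quadraticChar F b) * quadraticChar F b = 1 := by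
      rw [← sq]; exact quadraticChar_sq_one hb
    simp only [hχ, MulChar.ringHomComp_apply]
    rw [← map_mul, this, map_one]
  calc gaussSum χ (ψ.mulShift b) = (χ b * χ b) * gaussSum χ (ψ.mulShift b) := by rw [hbb, one_mul]
    _ = χ b * (χ b * gaussSum χ (ψ.mulShift b)) := by ring
    _ = ((quadraticChar F b : ℤ) : R') * gaussSum χ ψ := by
        rw [show ((Units.mk0 b hb : F)) = b from rfl] at hms
        rw [hms]; simp [hχ]

private lemma half_count' {F : Type*} [Field F] [Fintype F] [DecidableEq F]
    (hF : ringChar F ≠ 2) :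
    ({a ∈ univ | quadraticChar F a = 1} : Finset F).card = (Fintype.card F - 1) / 2 ∧
    ({a ∈ univ | quadraticChar F a = -1} : Finset F).card = (Fintype.card F - 1) / 2 := by
  obtain ⟨c, hc⟩ := quadraticChar_exists_neg_one hF
  have hc0 : c ≠ 0 := by
    intro h; rw [h, MulChar.map_zero] at hc; norm_num at hc
  have hbij : ({a ∈ univ | quadraticChar F a = 1} : Finset F).card
      = ({a ∈ univ | quadraticChar F a = -1} : Finset F).card := by
    apply Finset.card_bij' (fun a _ => c * a) (fun b _ => c⁻¹ * b)
    · intro a ha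
      simp only [mem_filter, mem_univ, true_and] at ha ⊢
      rw [map_mul, hc, ha]; ring
    · intro b hb
      simp only [mem_filter, mem_univ, true_and] at hb ⊢
      have hci : quadraticChar F c⁻¹ = -1 := by
        have h1 : quadraticChar F c * quadraticChar F c⁻¹ = 1 := by
          rw [← map_mul, mul_inv_cancel₀ hc0, map_one]
        rw [hc] at h1; linarith
      rw [map_mul, hci, hb]; ring
    · intro a _; rw [inv_mul_cancel_left₀ hc0]
    · intro b _; rw [mul_inv_cancel_left₀ hc0]
  have hdisj : Disjoint ({a ∈ univ | quadraticChar F a = 1} : Finset F)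
      ({a ∈ univ | quadraticChar F a = -1} : Finset F) := by
    rw [Finset.disjoint_left]
    intro a h1 h2
    simp only [mem_filter] at h1 h2
    rw [h1.2] at h2; norm_num at h2
  have hunion : ({a ∈ univ | quadraticChar F a = 1} : Finset F)
      ∪ ({a ∈ univ | quadraticChar F a = -1} : Finset F) = univ.erase 0 := by
    rw [← Finset.filter_or]
    ext a
    simp only [mem_filter, mem_univ, true_and, mem_erase, and_true]
    constructor
    · rintro (h | h) rfl <;> rw [MulChar.map_zero] at h <;> norm_num at h
    · intro ha; exact quadraticChar_dichotomy ha
  have hsum : ({a ∈ univ | quadraticChar F a = 1} : Finset F).card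
      + ({a ∈ univ | quadraticChar F a = -1} : Finset F).card = Fintype.card F - 1 := by
    rw [← Finset.card_union_of_disjoint hdisj, hunion,
      Finset.card_erase_of_mem (mem_univ 0), Finset.card_univ]
  have hoddc := FiniteField.odd_card_of_char_ne_two hF
  have hpos : 0 < Fintype.card F := Fintype.card_pos
  constructor <;> omega

private lemma addChar_map_sum {A M : Type*} [AddCommMonoid A] [CommMonoid M] (ψ : AddChar A M)
    {ι : Type*} (s : Finset ι) (f : ι → A) :
    ψ (∑ i ∈ s, f i) = ∏ i ∈ s, ψ (f i) := by
  classical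
  induction s using Finset.induction with
  | empty => simp
  | insert _ _ h ih => rw [Finset.sum_insert h, Finset.prod_insert h, AddChar.map_add_eq_mul, ih]

/-- `m` even. Diagonalizing `Tr(a x²)` as `∑ dᵢ yᵢ²` over `F_p` for
each `a ∈ F_q^*`, exactly half the elements of `F_q^*` have discriminant class
`η((-1)^{m/2} Δ_a) = 1` and exactly half have class `-1`. -/
theorem stmt_13 (p m : ℕ) [Fact p.Prime] (hodd : p ≠ 2) (hm : 0 < m) (heven : Even m)
    (F : Type*) [Field F] [Fintype F] [Algebra (ZMod p) F]
    (hcard : Fintype.card F = p ^ m)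
    (e : F → (F ≃ₗ[ZMod p] (Fin m → ZMod p))) (d : F → Fin m → ZMod p)
    (hdiag : ∀ a : F, a ≠ 0 → (∀ i, d a i ≠ 0) ∧
      ∀ x : F, Algebra.trace (ZMod p) F (a * x ^ 2) = ∑ i, d a i * (e a x i) ^ 2) :
    Nat.card {a : F // a ≠ 0 ∧
        quadraticChar (ZMod p) ((-1) ^ (m / 2) * ∏ i, d a i) = 1} = (p ^ m - 1) / 2 ∧
    Nat.card {a : F // a ≠ 0 ∧
        quadraticChar (ZMod p) ((-1) ^ (m / 2) * ∏ i, d a i) = -1} = (p ^ m - 1) / 2 := by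
  classical
  have hp : Fact p.Prime := ‹_›
  haveI : CharP F p := charP_of_injective_algebraMap (algebraMap (ZMod p) F).injective p
  have hFp : ringChar F = p := ringChar.eq F p
  have hF2 : ringChar F ≠ 2 := by rw [hFp]; exact hodd
  have hp2 : ringChar (ZMod p) ≠ 2 := by rw [ZMod.ringChar_zmod_n]; exact hodd
  -- primitive additive characters
  set pp : ℕ+ := ⟨p, hp.out.pos⟩ with hpp
  have hpC : ((pp : ℕ) : ℂ) ≠ 0 := Nat.cast_ne_zero.mpr hp.out.ne_zero
  set ψC := AddChar.primitiveZModChar pp ℂ hpC with hψC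
  set R' := CyclotomicField ψC.n ℂ with hR'
  set ψ₀ : AddChar (ZMod p) R' := ψC.char with hψ₀def
  have hψ₀ : ψ₀.IsPrimitive := ψC.prim
  set Ψ : AddChar F R' := ψ₀.compAddMonoidHom (Algebra.trace (ZMod p) F).toAddMonoidHom with hΨdef
  -- trace is nonzero, hence Ψ is primitive
  have hTrne : ∃ z : F, Algebra.trace (ZMod p) F z ≠ 0 := by
    obtain ⟨hd1, hx1⟩ := hdiag 1 one_ne_zero
    set i0 : Fin m := ⟨0, hm⟩
    refine ⟨1 * ((e 1).symm (Pi.single i0 1)) ^ 2, ?_⟩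
    rw [hx1]
    have he : e 1 ((e 1).symm (Pi.single i0 1)) = Pi.single i0 1 :=
      (e 1).apply_symm_apply _
    rw [he]
    have : ∑ i, d 1 i * ((Pi.single i0 1 : Fin m → ZMod p) i) ^ 2 = d 1 i0 := by
      rw [Finset.sum_eq_single i0]
      · simp
      · intro j _ hj
        rw [Pi.single_eq_of_ne hj]
        ring
      · intro h; exact absurd (Finset.mem_univ i0) h
    rw [this]
    exact hd1 i0
  have hTrsurj : Function.Surjective (Algebra.trace (ZMod p) F) := by
    obtain ⟨z, hz⟩ := hTrne
    intro t
    refine ⟨(t * (Algebra.trace (ZMod p) F z)⁻¹) • z, ?_⟩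
    rw [map_smul, smul_eq_mul, mul_assoc, inv_mul_cancel₀ hz, mul_one]
  have hψ0ne : ψ₀ ≠ 1 := by
    have := hψ₀ (one_ne_zero)
    rwa [AddChar.mulShift_one] at this
  have hΨne : Ψ ≠ 1 := by
    obtain ⟨u, hu⟩ := AddChar.ne_one_iff.mp hψ0ne
    obtain ⟨x, hx⟩ := hTrsurj u
    refine AddChar.ne_one_iff.mpr ⟨x, ?_⟩
    show ψ₀ (Algebra.trace (ZMod p) F x) ≠ 1
    rw [hx]; exact hu
  have hΨ : Ψ.IsPrimitive := AddChar.IsPrimitive.of_ne_one hΨne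
  -- Gauss sums
  set χK := quadraticChar (ZMod p) with hχK
  set χF := quadraticChar F with hχF
  set χK' := χK.ringHomComp (Int.castRingHom R') with hχK'
  set χF' := χF.ringHomComp (Int.castRingHom R') with hχF'
  set Gp := gaussSum χK' ψ₀ with hGpdef
  set GF := gaussSum χF' Ψ with hGFdef
  have hGp : Gp ≠ 0 := by
    refine gaussSum_ne_zero_of_nontrivial ?_ ?_ hψ₀
    · rw [ZMod.card]
      exact Nat.cast_ne_zero.mpr hp.out.ne_zero
    · exact (MulChar.ringHomComp_ne_one_iff (RingHom.injective_int _)).mpr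
        (quadraticChar_ne_one hp2)
  have hGF : GF ≠ 0 := by
    refine gaussSum_ne_zero_of_nontrivial ?_ ?_ hΨ
    · rw [hcard]
      exact Nat.cast_ne_zero.mpr (pow_ne_zero m hp.out.ne_zero)
    · exact (MulChar.ringHomComp_ne_one_iff (RingHom.injective_int _)).mpr
        (quadraticChar_ne_one hF2)
  -- the main Gauss sum identity
  have hE : ∀ a : F, a ≠ 0 →
      ((χK (∏ i, d a i) : ℤ) : R') * Gp ^ m = ((χF a : ℤ) : R') * GF := by
    intro a ha
    obtain ⟨hdne, hdg⟩ := hdiag a ha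
    have e1 : ∑ x : F, Ψ (a * x ^ 2) = ((χF a : ℤ) : R') * GF := key_sum' hF2 hΨ ha
    have e2 : ∑ x : F, Ψ (a * x ^ 2) = ((χK (∏ i, d a i) : ℤ) : R') * Gp ^ m := by
      calc ∑ x : F, Ψ (a * x ^ 2) = ∑ x : F, ∏ i, ψ₀ (d a i * (e a x i) ^ 2) := by
            refine Finset.sum_congr rfl fun x _ => ?_
            show ψ₀ (Algebra.trace (ZMod p) F (a * x ^ 2)) = _
            rw [hdg x]
            exact addChar_map_sum ψ₀ univ _
        _ = ∑ y : Fin m → ZMod p, ∏ i, ψ₀ (d a i * (y i) ^ 2) :=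
            Fintype.sum_equiv (e a).toEquiv _ _ (fun x => rfl)
        _ = ∏ i, ∑ c : ZMod p, ψ₀ (d a i * c ^ 2) := by
            rw [← Finset.sum_prod_piFinset Finset.univ (fun i c => ψ₀ (d a i * c ^ 2)),
              Fintype.piFinset_univ]
        _ = ∏ i : Fin m, (((χK (d a i) : ℤ) : R') * Gp) :=
            Finset.prod_congr rfl fun i _ => key_sum' hp2 hψ₀ (hdne i)
        _ = ((χK (∏ i, d a i) : ℤ) : R') * Gp ^ m := by
            rw [Finset.prod_mul_distrib, Finset.prod_const, Finset.card_univ, Fintype.card_fin]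
            congr 1
            rw [map_prod]
            push_cast
            rfl
    rw [← e1, e2]
  -- derive the character relation in ℤ
  have hrel : ∀ a : F, a ≠ 0 →
      χK ((-1) ^ (m / 2) * ∏ i, d a i)
        = χK ((-1) ^ (m / 2) * ∏ i, d 1 i) * χF a := by
    intro a ha
    have h1 := hE 1 one_ne_zero
    rw [map_one, Int.cast_one, one_mul] at h1
    have ha' := hE a ha
    have hcast : ((χK (∏ i, d a i) : ℤ) : R')
        = (((χF a * χK (∏ i, d 1 i)) : ℤ) : R') := by
      have hne : Gp ^ m * GF ≠ 0 := mul_ne_zero (pow_ne_zero _ hGp) hGF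
      apply mul_right_cancel₀ hne
      push_cast
      calc ((χK (∏ i, d a i) : ℤ) : R') * (Gp ^ m * GF)
          = (((χK (∏ i, d a i) : ℤ) : R') * Gp ^ m) * GF := by ring
        _ = (((χF a : ℤ) : R') * GF) * GF := by rw [ha']
        _ = ((χF a : ℤ) : R') * (((χK (∏ i, d 1 i) : ℤ) : R') * Gp ^ m) * GF := by
            rw [h1]
        _ = ((χF a : ℤ) : R') * ((χK (∏ i, d 1 i) : ℤ) : R') * (Gp ^ m * GF) := by ring
        _ = (((χF a * χK (∏ i, d 1 i)) : ℤ) : R') * (Gp ^ m * GF) := by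
            congr 1; exact (Int.cast_mul (α := R') _ _).symm
    have hZ : χK (∏ i, d a i) = χF a * χK (∏ i, d 1 i) := by exact_mod_cast hcast
    rw [map_mul, map_mul, hZ]
    ring
  -- epsilon and its dichotomy
  set ε := χK ((-1) ^ (m / 2) * ∏ i, d 1 i) with hε
  have hεd : ε = 1 ∨ ε = -1 := by
    apply quadraticChar_dichotomy
    apply mul_ne_zero
    · exact pow_ne_zero _ (neg_ne_zero.mpr one_ne_zero)
    · exact Finset.prod_ne_zero_iff.mpr fun i _ => (hdiag 1 one_ne_zero).1 i
  -- counting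
  have hhalf := half_count' hF2
  rw [hcard] at hhalf
  have hcnt : ∀ v : ℤ, v = 1 ∨ v = -1 →
      Nat.card {a : F // a ≠ 0 ∧ χK ((-1) ^ (m / 2) * ∏ i, d a i) = v}
        = ({a ∈ univ | χF a = ε * v} : Finset F).card := by
    intro v hv
    rw [Nat.card_eq_fintype_card, Fintype.card_subtype]
    congr 1
    ext a
    simp only [mem_filter, mem_univ, true_and]
    constructor
    · rintro ⟨ha, hva⟩
      rw [hrel a ha] at hva
      rcases hεd with h | h <;> rcases hv with rfl | rfl <;>
        rw [h] at hva ⊢ <;> linarith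
    · intro hfa
      have ha : a ≠ 0 := by
        intro h
        rw [h, MulChar.map_zero] at hfa
        rcases hεd with h' | h' <;> rcases hv with rfl | rfl <;> rw [h'] at hfa <;> norm_num at hfa
      refine ⟨ha, ?_⟩
      rw [hrel a ha, hfa]
      rcases hεd with h | h <;> rcases hv with rfl | rfl <;> rw [h] <;> ring
  constructor
  · rw [hcnt 1 (Or.inl rfl)]
    rcases hεd with h | h <;> rw [h]
    · simpa [hχF] using hhalf.1
    · simpa [hχF] using hhalf.2
  · rw [hcnt (-1) (Or.inr rfl)]
    rcases hεd with h | h <;> rw [h]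
    · simpa [hχF] using hhalf.2
    · simpa [hχF] using hhalf.1
end

section
/- Let p be a prime, q = p^m, r < p, and let α_{i_1}, ..., α_{i_t} be distinct elements of F_q^*. The elements 1 + α_{i_1} T, ..., 1 + α_{i_t} T generate the group (F_q[T]/(T^{r+1}))^* / F_q^* (an F_p-vector space of dimension rm) if and only if the rm × t matrix over F_p, whose (k, j)-block column entries are the F_p-coordinate vectors of α_{i_j}^k for 1 ≤ k ≤ r, has rank rm. -/
namespace Stmt18
open Polynomial Finset

noncomputable section
variable (F : Type*) [Field F] (r : ℕ)

abbrev Iq : Ideal F[X] := Ideal.span {X ^ (r+1)}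
abbrev Iq' : Ideal F[X] := Ideal.span {X ^ r}
abbrev Rq := F[X] ⧸ Iq F r
abbrev Rq' := F[X] ⧸ Iq' F r

abbrev mkk : F[X] →+* Rq F r := Ideal.Quotient.mk _
abbrev mkk' : F[X] →+* Rq' F r := Ideal.Quotient.mk _

lemma Ile : Iq F r ≤ Iq' F r := by
  rw [Ideal.span_singleton_le_iff_mem, Ideal.mem_span_singleton]
  exact pow_dvd_pow X (Nat.le_succ r)

def piq : Rq F r →+* Rq' F r := Ideal.Quotient.factor (Ile F r)

@[simp] lemma piq_mk (f : F[X]) : piq F r (mkk F r f) = mkk' F r f :=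
  Ideal.Quotient.factor_mk _ _

def Dq : Rq F r → Rq' F r := fun x => mkk' F r (derivative (Quotient.out x))

lemma mkk_out (x : Rq F r) : mkk F r (Quotient.out x) = x := Quotient.out_eq x

lemma Dq_mk (f : F[X]) : Dq F r (mkk F r f) = mkk' F r (derivative f) := by
  unfold Dq
  have h : mkk F r (Quotient.out (mkk F r f)) = mkk F r f := mkk_out F r _
  rw [Ideal.Quotient.mk_eq_mk_iff_sub_mem] at h ⊢
  obtain ⟨c, hc⟩ := Ideal.mem_span_singleton'.mp h
  rw [Ideal.mem_span_singleton]
  have hd : derivative (Quotient.out (mkk F r f)) - derivative f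
      = derivative (c * X ^ (r+1)) := by rw [← derivative_sub, hc]
  rw [hd, derivative_mul, derivative_X_pow]
  refine dvd_add (Dvd.dvd.mul_left ?_ _) (Dvd.dvd.mul_left ?_ _)
  · exact (pow_dvd_pow X (Nat.le_succ r))
  · exact Dvd.dvd.mul_left (pow_dvd_pow X (by omega : r ≤ r + 1 - 1)) _

lemma Dq_mul (x y : Rq F r) :
    Dq F r (x * y) = Dq F r x * piq F r y + piq F r x * Dq F r y := by
  obtain ⟨f, rfl⟩ := Ideal.Quotient.mk_surjective x
  obtain ⟨g, rfl⟩ := Ideal.Quotient.mk_surjective y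
  rw [← map_mul, Dq_mk, Dq_mk, Dq_mk, derivative_mul, map_add, map_mul, map_mul,
    piq_mk, piq_mk]

lemma Dq_one : Dq F r 1 = 0 := by
  have : (1 : Rq F r) = mkk F r 1 := (map_one _).symm
  rw [this, Dq_mk, derivative_one, map_zero]

/-- logarithmic derivative -/
def dlog : (Rq F r)ˣ →* Multiplicative (Rq' F r) where
  toFun u := Multiplicative.ofAdd (Dq F r ↑u * piq F r ↑u⁻¹)
  map_one' := by simp [Dq_one]
  map_mul' u v := by
    have hu : piq F r ↑u * piq F r ↑u⁻¹ = 1 := by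
      rw [← map_mul, Units.mul_inv, map_one]
    have hv : piq F r ↑v * piq F r ↑v⁻¹ = 1 := by
      rw [← map_mul, Units.mul_inv, map_one]
    rw [← ofAdd_add]
    show Multiplicative.ofAdd (Dq F r ↑(u*v) * piq F r ↑(u*v)⁻¹) = _
    congr 1
    rw [Units.val_mul, Dq_mul, mul_inv_rev, Units.val_mul, map_mul]
    linear_combination (Dq F r ↑u * piq F r ↑u⁻¹) * hv + (Dq F r ↑v * piq F r ↑v⁻¹) * hu

lemma dlog_apply (u : (Rq F r)ˣ) :
    dlog F r u = Multiplicative.ofAdd (Dq F r ↑u * piq F r ↑u⁻¹) := rfl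

instance : Nontrivial (Rq F r) := by
  refine Ideal.Quotient.nontrivial_iff.mpr ?_
  rw [Ne, Ideal.span_singleton_eq_top]
  intro h
  have h2 := Polynomial.natDegree_eq_zero_of_isUnit (p := (X ^ (r+1) : F[X])) h
  rw [natDegree_X_pow] at h2
  omega

lemma algebraMap_eq_mk_C (c : F) : algebraMap F (Rq F r) c = mkk F r (C c) := by
  rw [← Ideal.Quotient.mk_algebraMap, Polynomial.algebraMap_eq]

lemma algebraMap_eq_mk_C' (c : F) : algebraMap F (Rq' F r) c = mkk' F r (C c) := by
  rw [← Ideal.Quotient.mk_algebraMap, Polynomial.algebraMap_eq]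

lemma dlog_unitsMap (c : Fˣ) :
    dlog F r (Units.map (algebraMap F (Rq F r)).toMonoidHom c) = 1 := by
  rw [dlog_apply]
  have h1 : ((Units.map (algebraMap F (Rq F r)).toMonoidHom c : (Rq F r)ˣ) : Rq F r)
      = algebraMap F (Rq F r) ↑c := rfl
  have : Dq F r (algebraMap F (Rq F r) ↑c) = 0 := by
    rw [algebraMap_eq_mk_C, Dq_mk, derivative_C, map_zero]
  rw [h1, this, zero_mul, ofAdd_zero]

lemma charNeZero {p : ℕ} [Fact p.Prime] [CharP F p] (hrp : r < p) {n : ℕ}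
    (hn : 0 < n) (hnr : n ≤ r) : (n : F) ≠ 0 := by
  rw [Ne, CharP.cast_eq_zero_iff F p]
  intro hdvd
  have := Nat.le_of_dvd hn hdvd
  omega

lemma dlog_eq_one {p : ℕ} [Fact p.Prime] [CharP F p] (hrp : r < p) (u : (Rq F r)ˣ)
    (h : dlog F r u = 1) :
    ∃ c : Fˣ, Units.map (algebraMap F (Rq F r)).toMonoidHom c = u := by
  rw [dlog_apply] at h
  have h0 : Dq F r ↑u * piq F r ↑u⁻¹ = 0 := ofAdd_eq_one.mp h
  have hD : Dq F r ↑u = 0 := by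
    have h2 := congrArg (· * piq F r ↑u) h0
    simp only [zero_mul] at h2
    have h3 : piq F r ↑u⁻¹ * piq F r ↑u = 1 := by rw [← map_mul, Units.inv_mul, map_one]
    calc Dq F r ↑u = Dq F r ↑u * (piq F r ↑u⁻¹ * piq F r ↑u) := by rw [h3, mul_one]
    _ = 0 := by rw [← mul_assoc, h2]
  obtain ⟨f, hf⟩ := Ideal.Quotient.mk_surjective (↑u : Rq F r)
  set f₀ := f %ₘ (X ^ (r+1)) with hf₀
  have hmonic : (X ^ (r+1) : F[X]).Monic := monic_X_pow _
  have hmk : mkk F r f₀ = ↑u := by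
    rw [← hf]
    rw [Ideal.Quotient.mk_eq_mk_iff_sub_mem, hf₀, modByMonic_eq_sub_mul_div f _]
    rw [Ideal.mem_span_singleton]
    exact ⟨-(f /ₘ X ^ (r+1)), by ring⟩
  have hdeg : f₀.natDegree ≤ r := by
    have h5 := natDegree_modByMonic_lt f hmonic (by
      intro h1
      have := congrArg natDegree h1
      rw [natDegree_X_pow, natDegree_one] at this
      omega)
    rw [natDegree_X_pow, ← hf₀] at h5
    omega
  have hD' : mkk' F r (derivative f₀) = 0 := by
    rw [← Dq_mk, hmk, hD]
  have hdvd : (X : F[X]) ^ r ∣ derivative f₀ := by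
    rw [← Ideal.mem_span_singleton]
    exact (Ideal.Quotient.eq_zero_iff_mem).mp hD'
  have hder : derivative f₀ = 0 := by
    by_contra hd0
    have h6 : r ≤ (derivative f₀).natDegree := by
      have := natDegree_le_of_dvd hdvd hd0
      rwa [natDegree_X_pow] at this
    by_cases h7 : f₀.natDegree = 0
    · obtain ⟨c, hc⟩ := natDegree_eq_zero.mp h7
      rw [← hc] at hd0
      simp at hd0
    · have := natDegree_derivative_lt h7
      omega
  have hcoeff : ∀ n : ℕ, f₀.coeff (n+1) = 0 := by
    intro n
    by_cases hn : n + 1 ≤ r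
    · have h8 := coeff_derivative f₀ n
      rw [hder, coeff_zero] at h8
      have h9 : ((n : F) + 1) ≠ 0 := by
        have := charNeZero F r hrp (n := n+1) (by omega) hn
        push_cast at this ⊢; exact this
      have := mul_eq_zero.mp h8.symm
      tauto
    · exact coeff_eq_zero_of_natDegree_lt (by omega)
  have hC : f₀ = C (f₀.coeff 0) := by
    ext n
    cases n with
    | zero => simp
    | succ k => simp [hcoeff k, coeff_C]
  have hval : algebraMap F (Rq F r) (f₀.coeff 0) = ↑u := by
    rw [algebraMap_eq_mk_C, ← hC, hmk]
  have hc0 : f₀.coeff 0 ≠ 0 := by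
    intro h10
    rw [h10, map_zero] at hval
    exact Units.ne_zero u hval.symm
  refine ⟨Units.mk0 _ hc0, Units.ext ?_⟩
  simpa using hval


variable {F} in
/-- coefficients of the solution to `u' = g u`, `u 0 = 1` -/
noncomputable def usol (g : F[X]) : ℕ → F
  | 0 => 1
  | (k+1) => ((k+1 : ℕ) : F)⁻¹ * ∑ i ∈ Finset.range (k+1), g.coeff i * usol g (k - i)

def Upoly (g : F[X]) : F[X] := ∑ k ∈ Finset.range (r+1), C (usol g k) * X ^ k

lemma Upoly_coeff (g : F[X]) (n : ℕ) :
    (Upoly F r g).coeff n = if n ≤ r then usol g n else 0 := by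
  rw [Upoly, finset_sum_coeff]
  simp only [coeff_C_mul, coeff_X_pow, mul_ite, mul_one, mul_zero]
  rw [Finset.sum_ite_eq (Finset.range (r+1)) n (fun k => usol g k)]
  simp [Nat.lt_succ_iff]

lemma Upoly_deriv_coeff {p : ℕ} [Fact p.Prime] [CharP F p] (hrp : r < p) (g : F[X])
    {d : ℕ} (hd : d < r) :
    (derivative (Upoly F r g)).coeff d = (g * Upoly F r g).coeff d := by
  rw [coeff_derivative, coeff_mul, Finset.Nat.sum_antidiagonal_eq_sum_range_succ_mk]
  have h1 : (Upoly F r g).coeff (d+1) = usol g (d+1) := by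
    rw [Upoly_coeff]; simp [Nat.succ_le_of_lt hd]
  have h2 : ∀ i ∈ Finset.range (d+1), g.coeff i * (Upoly F r g).coeff (d - i)
      = g.coeff i * usol g (d - i) := by
    intro i _
    rw [Upoly_coeff]
    have : d - i ≤ r := by omega
    simp [this]
  rw [Finset.sum_congr rfl h2, h1]
  show usol g (d+1) * _ = _
  rw [usol]
  have hne : (((d+1 : ℕ)) : F) ≠ 0 := charNeZero F r hrp (by omega) (by omega)
  push_cast at hne ⊢
  field_simp

lemma dlog_surjective {p : ℕ} [Fact p.Prime] [CharP F p] (hrp : r < p) :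
    Function.Surjective (dlog F r) := by
  intro y
  obtain ⟨g, hg⟩ := Ideal.Quotient.mk_surjective (Multiplicative.toAdd y)
  set U := Upoly F r g with hU
  have hU0 : U.coeff 0 = 1 := by rw [hU, Upoly_coeff]; simp [usol]
  have hnil : IsNilpotent (mkk F r (U - 1)) := by
    refine ⟨r+1, ?_⟩
    rw [← map_pow, Ideal.Quotient.eq_zero_iff_mem, Ideal.mem_span_singleton]
    exact pow_dvd_pow_of_dvd (X_dvd_iff.mpr (by simp [hU0])) _
  have hunit : IsUnit (mkk F r U) := by
    have : mkk F r U = 1 + mkk F r (U - 1) := by rw [map_sub, map_one]; ring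
    rw [this]
    exact IsNilpotent.isUnit_one_add hnil
  refine ⟨hunit.unit, ?_⟩
  have hval : (↑hunit.unit : Rq F r) = mkk F r U := hunit.unit_spec
  have hDu : Dq F r ↑hunit.unit = mkk' F r g * piq F r ↑hunit.unit := by
    rw [hval, Dq_mk, piq_mk, ← map_mul]
    rw [Ideal.Quotient.mk_eq_mk_iff_sub_mem, Ideal.mem_span_singleton]
    rw [X_pow_dvd_iff]
    intro d hd
    rw [coeff_sub, Upoly_deriv_coeff F r hrp g hd, sub_self]
  rw [dlog_apply, hDu]
  have : piq F r ↑hunit.unit * piq F r ↑hunit.unit⁻¹ = 1 := by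
    rw [← map_mul, Units.mul_inv, map_one]
  rw [mul_assoc, this, mul_one, hg]
  simp

lemma smul_mk' (c : F) (f : F[X]) : c • mkk' F r f = mkk' F r (C c * f) := by
  calc c • mkk' F r f = c • (Ideal.Quotient.mkₐ F (Iq' F r) f) := rfl
  _ = Ideal.Quotient.mkₐ F _ (c • f) := (map_smul _ c f).symm
  _ = mkk' F r (C c * f) := by rw [smul_eq_C_mul]; rfl

lemma one_add_CX_mul_inv (a : F) :
    mkk F r (1 + C a * X) * mkk F r (∑ k ∈ Finset.range (r+1), (-(C a * X)) ^ k) = 1 := by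
  have hgeom := geom_sum_mul (-(C a * X)) (r+1)
  have h1 : (1 + C a * X) * (∑ k ∈ Finset.range (r+1), (-(C a * X)) ^ k)
      = 1 - (-(C a * X)) ^ (r+1) := by
    have : (1 + C a * X) = -((-(C a * X)) - 1) := by ring
    rw [this, mul_comm]
    rw [mul_neg, hgeom]
    ring
  rw [← map_mul, h1, map_sub, map_one]
  have h2 : mkk F r ((-(C a * X)) ^ (r+1)) = 0 := by
    rw [Ideal.Quotient.eq_zero_iff_mem, Ideal.mem_span_singleton']
    exact ⟨(-(C a)) ^ (r+1), by rw [← mul_pow]; ring_nf⟩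
  rw [h2, sub_zero]

lemma dlog_one_add_CX (a : F) (u : (Rq F r)ˣ)
    (hval : (↑u : Rq F r) = mkk F r (1 + C a * X)) :
    dlog F r u = Multiplicative.ofAdd
      (∑ k ∈ Finset.range r, ((-1:F)^k * a^(k+1)) • mkk' F r (X ^ k)) := by
  have hinv : (↑u⁻¹ : Rq F r) = mkk F r (∑ k ∈ Finset.range (r+1), (-(C a * X)) ^ k) := by
    apply Units.inv_eq_of_mul_eq_one_right
    rw [hval]
    exact one_add_CX_mul_inv F r a
  rw [dlog_apply, hval, hinv, Dq_mk, piq_mk]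
  congr 1
  have hder : derivative (1 + C a * X) = C a := by
    rw [derivative_add, derivative_one, derivative_C_mul_X, zero_add]
  rw [hder, ← map_mul, Finset.mul_sum]
  have hterm : ∀ k : ℕ, C a * (-(C a * X)) ^ k = C ((-1:F)^k * a^(k+1)) * X ^ k := by
    intro k
    rw [neg_pow, mul_pow, map_mul, map_pow, map_pow, map_neg, map_one]
    ring
  rw [Finset.sum_congr rfl (fun k _ => hterm k), map_sum, Finset.sum_range_succ]
  have hlast : mkk' F r (C ((-1:F)^r * a^(r+1)) * X ^ r) = 0 := by
    rw [Ideal.Quotient.eq_zero_iff_mem, Ideal.mem_span_singleton']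
    exact ⟨C ((-1:F)^r * a^(r+1)), rfl⟩
  rw [hlast, add_zero]
  refine Finset.sum_congr rfl fun k _ => ?_
  rw [smul_mk']

def pbasis : Module.Basis (Fin r) F (Rq' F r) :=
  ((AdjoinRoot.powerBasis' (monic_X_pow (n := r) (R := F))).basis).reindex
    (finCongr (by rw [AdjoinRoot.powerBasis'_dim, natDegree_X_pow]))

lemma pbasis_apply (k : Fin r) :
    pbasis F r k = mkk' F r ((X:F[X]) ^ (k:ℕ)) := by
  have h1 := Module.Basis.reindex_apply ((AdjoinRoot.powerBasis' (monic_X_pow (n := r) (R := F))).basis)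
    (finCongr (by rw [AdjoinRoot.powerBasis'_dim, natDegree_X_pow])) k
  rw [pbasis]
  refine h1.trans ?_
  rw [PowerBasis.basis_eq_pow, AdjoinRoot.powerBasis'_gen]
  show (AdjoinRoot.mk _ X) ^ _ = _
  rw [← map_pow]
  rfl

lemma closure_ofAdd_eq_top_iff {A : Type*} [AddCommGroup A] (S : Set A) :
    Subgroup.closure (Multiplicative.ofAdd '' S) = ⊤ ↔ AddSubgroup.closure S = ⊤ := by
  have htop : AddSubgroup.toSubgroup (⊤ : AddSubgroup A) = ⊤ := rfl
  have hmem : ∀ (K : AddSubgroup A) (x : A),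
      Multiplicative.ofAdd x ∈ AddSubgroup.toSubgroup K ↔ x ∈ K := fun _ _ => Iff.rfl
  have hmem' : ∀ (K : Subgroup (Multiplicative A)) (x : A),
      x ∈ (AddSubgroup.toSubgroup (A := A)).symm K ↔ Multiplicative.ofAdd x ∈ K :=
    fun _ _ => Iff.rfl
  have key : Subgroup.closure (Multiplicative.ofAdd '' S)
      = AddSubgroup.toSubgroup (AddSubgroup.closure S) := by
    apply le_antisymm
    · rw [Subgroup.closure_le]
      rintro x ⟨a, ha, rfl⟩
      exact (hmem _ a).mpr (AddSubgroup.subset_closure ha)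
    · have h2 : AddSubgroup.closure S ≤
          (AddSubgroup.toSubgroup (A := A)).symm (Subgroup.closure (Multiplicative.ofAdd '' S)) := by
        rw [AddSubgroup.closure_le]
        intro a ha
        exact (hmem' _ a).mpr (Subgroup.subset_closure (Set.mem_image_of_mem _ ha))
      intro x hx
      exact h2 hx
  rw [key]
  constructor
  · intro h
    exact (AddSubgroup.toSubgroup (A := A)).injective (h.trans htop.symm)
  · intro h
    rw [h]; exact htop

lemma addClosure_eq_top_iff_span {p : ℕ} {M : Type*} [AddCommGroup M] [Module (ZMod p) M]
    (S : Set M) :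
    AddSubgroup.closure S = ⊤ ↔ Submodule.span (ZMod p) S = ⊤ := by
  have htop : AddSubgroup.toZModSubmodule p (⊤ : AddSubgroup M) = ⊤ := rfl
  have key : AddSubgroup.toZModSubmodule p (AddSubgroup.closure S)
      = Submodule.span (ZMod p) S := by
    apply le_antisymm
    · have h2 : AddSubgroup.closure S ≤
          (AddSubgroup.toZModSubmodule p (M := M)).symm (Submodule.span (ZMod p) S) := by
        rw [AddSubgroup.closure_le]
        exact Submodule.subset_span
      intro x hx
      exact h2 hx
    · rw [Submodule.span_le]
      exact AddSubgroup.subset_closure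
  constructor
  · intro h
    rw [← key, h]; exact htop
  · intro h
    exact (AddSubgroup.toZModSubmodule p (M := M)).injective ((key.trans h).trans htop.symm)

lemma subgroup_closure_range_eq_top_iff {G H : Type*} [Group G] [Group H]
    {ι : Type*} (f : G →* H) (hinj : Function.Injective f) (hsurj : Function.Surjective f)
    (g : ι → G) :
    Subgroup.closure (Set.range g) = ⊤ ↔ Subgroup.closure (Set.range (fun i => f (g i))) = ⊤ := by
  have himg : Set.range (fun i => f (g i)) = f '' Set.range g := by
    rw [← Set.range_comp]; rfl
  rw [himg, ← MonoidHom.map_closure]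
  constructor
  · intro h
    rw [h]
    exact Subgroup.map_top_of_surjective f hsurj
  · intro h
    apply Subgroup.map_injective hinj
    rw [h, Subgroup.map_top_of_surjective f hsurj]

lemma span_range_equiv_eq_top_iff {R M N : Type*} [CommRing R] [AddCommGroup M]
    [AddCommGroup N] [Module R M] [Module R N] {ι : Type*} (e : M ≃ₗ[R] N) (w : ι → M) :
    Submodule.span R (Set.range fun i => e (w i)) = ⊤ ↔
      Submodule.span R (Set.range w) = ⊤ := by
  have himg : (Set.range fun i => e (w i)) = e '' Set.range w := by
    rw [← Set.range_comp]; rfl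
  rw [himg, ← LinearEquiv.coe_coe, ← Submodule.map_span]
  constructor
  · intro h
    apply Submodule.map_injective_of_injective e.injective
    rw [h, Submodule.map_top]
    simp
  · intro h
    rw [h, Submodule.map_top]
    simp

lemma span_range_eq_top_iff_rank {K : Type*} [Field K] {ι κ : Type*} [Fintype ι] [Fintype κ]
    [DecidableEq ι] (cols : κ → (ι → K)) :
    Submodule.span K (Set.range cols) = ⊤ ↔
      (Matrix.of fun i j => cols j i).rank = Fintype.card ι := by
  have hT : Set.range (Matrix.transpose (Matrix.of fun i j => cols j i))
      = (Set.range cols : Set (ι → K)) := rfl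
  rw [Matrix.rank_eq_finrank_span_cols, Matrix.col, hT]
  constructor
  · intro h
    rw [h, finrank_top, Module.finrank_pi]
  · intro h
    apply Submodule.eq_top_of_finrank_eq
    rw [h, Module.finrank_pi]

end
end Stmt18

open Polynomial in
/-- the classes of `1 + α_{i_j} T` generate the group
`(F_q[T]/(T^{r+1}))^* / F_q^*` (an `F_p`-vector space of dimension `rm`)
iff the `rm × t` matrix of `F_p`-coordinate vectors of the powers `α_{i_j}^k`
(`1 ≤ k ≤ r`) has rank `rm`. -/
theorem stmt_18 (p m r t : ℕ) [Fact p.Prime] (hm : 0 < m) (hr : 0 < r) (hrp : r < p)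
    (F : Type*) [Field F] [Fintype F] [Algebra (ZMod p) F] (hcard : Fintype.card F = p ^ m)
    (γ : Module.Basis (Fin m) (ZMod p) F)
    (α : Fin t → F) (hα : Function.Injective α) (hα0 : ∀ j, α j ≠ 0) :
    letI R := Polynomial F ⧸ Ideal.span {(Polynomial.X : Polynomial F) ^ (r + 1)}
    letI N : Subgroup Rˣ := (Units.map (algebraMap F R).toMonoidHom).range
    haveI : N.Normal := @Subgroup.normal_of_isMulCommutative _ _ ⟨⟨fun a b => Units.ext (mul_comm (a : R) b)⟩⟩ N
    ∀ u : Fin t → Rˣ,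
      (∀ j, (u j : R) = Ideal.Quotient.mk (Ideal.span {(Polynomial.X : Polynomial F) ^ (r + 1)})
          (1 + Polynomial.C (α j) * Polynomial.X)) →
      (Subgroup.closure (Set.range fun j => QuotientGroup.mk (s := N) (u j)) = ⊤ ↔
        (Matrix.of fun ki : Fin r × Fin m => fun j : Fin t =>
            γ.repr (α j ^ ((ki.1 : ℕ) + 1)) ki.2).rank = r * m) := by
  intro u hu
  classical
  haveI : CharP F p := charP_of_injective_ringHom (algebraMap (ZMod p) F).injective p
  set N : Subgroup (Stmt18.Rq F r)ˣ :=
    (Units.map (algebraMap F (Stmt18.Rq F r)).toMonoidHom).range with hNdef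
  haveI hNn : N.Normal := @Subgroup.normal_of_isMulCommutative _ _ ⟨⟨fun a b => Units.ext (mul_comm (a : Stmt18.Rq F r) b)⟩⟩ N
  -- the quotient homomorphism
  have hker : N ≤ (Stmt18.dlog F r).ker := by
    rintro x ⟨c, rfl⟩
    exact Stmt18.dlog_unitsMap F r c
  set Ψ : ((Stmt18.Rq F r)ˣ ⧸ N) →* Multiplicative (Stmt18.Rq' F r) :=
    QuotientGroup.lift N (Stmt18.dlog F r) hker with hΨdef
  have hinj : Function.Injective Ψ := by
    rw [injective_iff_map_eq_one]
    intro x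
    refine QuotientGroup.induction_on x ?_
    intro z hz
    rw [hΨdef, QuotientGroup.lift_mk] at hz
    obtain ⟨c, hc⟩ := Stmt18.dlog_eq_one F r hrp z hz
    rw [QuotientGroup.eq_one_iff]
    exact ⟨c, hc⟩
  have hsurj : Function.Surjective Ψ := by
    intro y
    obtain ⟨v, hv⟩ := Stmt18.dlog_surjective F r hrp y
    exact ⟨QuotientGroup.mk v, by rw [hΨdef, QuotientGroup.lift_mk]; exact hv⟩
  rw [Stmt18.subgroup_closure_range_eq_top_iff Ψ hinj hsurj
    (fun j => QuotientGroup.mk (s := N) (u j))]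
  set wv : Fin t → Stmt18.Rq' F r := fun j =>
    ∑ k ∈ Finset.range r, ((-1:F)^k * (α j)^(k+1)) • Stmt18.mkk' F r (X^k) with hwvdef
  have hΨu : ∀ j, Ψ (QuotientGroup.mk (s := N) (u j)) = Multiplicative.ofAdd (wv j) := by
    intro j
    rw [hΨdef, QuotientGroup.lift_mk]
    exact Stmt18.dlog_one_add_CX F r (α j) (u j) (hu j)
  have hfun : (fun j => Ψ (QuotientGroup.mk (s := N) (u j)))
      = fun j => Multiplicative.ofAdd (wv j) := funext hΨu
  rw [hfun]
  have himg : Set.range (fun j => Multiplicative.ofAdd (wv j))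
      = Multiplicative.ofAdd '' Set.range wv := by
    rw [← Set.range_comp]; rfl
  rw [himg, Stmt18.closure_ofAdd_eq_top_iff]
  rw [Stmt18.addClosure_eq_top_iff_span (p := p)]
  set B : Module.Basis (Fin r × Fin m) (ZMod p) (Stmt18.Rq' F r) :=
    (γ.smulTower (Stmt18.pbasis F r)).reindex (Equiv.prodComm (Fin m) (Fin r)) with hBdef
  have hwv : ∀ j, wv j = ∑ k : Fin r,
      ((-1:F)^(k:ℕ) * (α j)^((k:ℕ)+1)) • Stmt18.pbasis F r k := by
    intro j
    simp only [Stmt18.pbasis_apply]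
    exact (Fin.sum_univ_eq_sum_range (fun k => ((-1:F)^k * (α j)^(k+1)) • Stmt18.mkk' F r (X^k)) r).symm
  have hrepr : ∀ j, ⇑((Stmt18.pbasis F r).repr (wv j))
      = fun k : Fin r => (-1:F)^(k:ℕ) * (α j)^((k:ℕ)+1) := by
    intro j; rw [hwv j, Module.Basis.repr_sum_self]
  have hBrepr : ∀ j (ki : Fin r × Fin m), B.repr (wv j) ki
      = (-1:ZMod p)^(ki.1:ℕ) * (γ.repr ((α j)^((ki.1:ℕ)+1)) ki.2) := by
    intro j ki
    rw [hBdef, Module.Basis.repr_reindex_apply, Module.Basis.smulTower_repr]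
    have h1 : (Equiv.prodComm (Fin m) (Fin r)).symm ki = (ki.2, ki.1) := rfl
    rw [h1]
    have h2 : (Stmt18.pbasis F r).repr (wv j) ki.1
        = (-1:F)^(ki.1:ℕ) * (α j)^((ki.1:ℕ)+1) := by rw [hrepr j]
    rw [h2]
    have h3 : ((-1:F)^(ki.1:ℕ) * (α j)^((ki.1:ℕ)+1))
        = ((-1:ZMod p)^(ki.1:ℕ)) • ((α j)^((ki.1:ℕ)+1)) := by
      rw [Algebra.smul_def, map_pow, map_neg, map_one]
    rw [h3, map_smul, Finsupp.smul_apply, smul_eq_mul]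
  set cols : Fin t → (Fin r × Fin m → ZMod p) :=
    fun j ki => γ.repr ((α j)^((ki.1:ℕ)+1)) ki.2 with hcolsdef
  set dE : (Fin r × Fin m → ZMod p) ≃ₗ[ZMod p] (Fin r × Fin m → ZMod p) :=
    LinearEquiv.piCongrRight (fun ki => LinearEquiv.smulOfNeZero (ZMod p) (ZMod p)
      ((-1)^(ki.1:ℕ)) (pow_ne_zero _ (neg_ne_zero.mpr one_ne_zero))) with hdEdef
  have hEv : (fun j => B.equivFun (wv j)) = fun j => dE (cols j) := by
    funext j ki
    rw [Module.Basis.equivFun_apply, hBrepr j ki]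
    rfl
  rw [← Stmt18.span_range_equiv_eq_top_iff B.equivFun wv, hEv,
    Stmt18.span_range_equiv_eq_top_iff dE cols,
    Stmt18.span_range_eq_top_iff_rank cols]
  have hM : (Matrix.of fun i j => cols j i)
      = Matrix.of (fun ki : Fin r × Fin m => fun j => γ.repr (α j ^ ((ki.1:ℕ)+1)) ki.2) := rfl
  rw [hM, Fintype.card_prod, Fintype.card_fin, Fintype.card_fin]
end
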